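/- arXiv:1611.03237 — 6 statements merged into one kernel-verified Lean document; each statement's English description precedes it below -/
import Mathlib

section
/- Fix a period L > 0, parameters d, α > 0 and admissible nonlinearities f₁, f₂ with zeros a₁, a₂. Let φ be a regular segregated pulsating front with speed s > 0 and set z(t,x) = φ(x − st, x). Assume additionally that ∂ₜz > 0 on the open set {z ≠ 0} and that for each t ∈ ℝ the function x ↦ z(t,x) has a unique zero Ξ(t), with Ξ continuous. Then for every t ∈ ℝ the one-sided limit ℓ(t) := lim_{x → Ξ(t)⁻} ∂ₓz(t,x) exists in ℝ and satisfies ℓ(t) ≤ 0; moreover ℓ is locally uniformly bounded from below: for every compact interval I ⊂ ℝ, inf_{t ∈ I} ℓ(t) > −∞. -/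
open MeasureTheory Set Filter Topology Function

noncomputable section

/-- An admissible nonlinearity with period `L` and zero `a`:
`f` is `C¹`, `L`-periodic in its second variable, positive at `u = 0` uniformly in `x`,
decreasing in its first variable, and vanishes at `u = a` for all `x`. -/
structure Admissible (L : ℝ) (f : ℝ → ℝ → ℝ) (a : ℝ) : Prop where
  smooth : ContDiff ℝ 1 (uncurry f)
  periodic : ∀ u x, f u (x + L) = f u x
  pos_at_zero : ∃ m > 0, ∀ x, m ≤ f 0 x
  strict_anti : ∀ x, StrictAnti (fun u => f u x)
  zero_pos : 0 < a
  zero_root : ∀ x, f a x = 0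

/-- `Zfun s φ t x = φ (x - s t, x)`. -/
def Zfun (s : ℝ) (φ : ℝ → ℝ → ℝ) : ℝ → ℝ → ℝ := fun t x => φ (x - s * t) x

/-- A regular segregated pulsating front with speed `s` and profile `φ`. -/
structure SegFront (L d α a₁ a₂ : ℝ) (f₁ f₂ : ℝ → ℝ → ℝ) (s : ℝ)
    (φ : ℝ → ℝ → ℝ) : Prop where
  cont : Continuous (uncurry φ)
  bdd : ∃ M, ∀ ξ x, |φ ξ x| ≤ M
  per : ∀ ξ x, φ ξ (x + L) = φ ξ x
  mono : ∀ x, Antitone (fun ξ => φ ξ x)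
  pos : ∃ ξ x, 0 < φ ξ x
  neg : ∃ ξ x, φ ξ x < 0
  lim_left : ∀ ε > 0, ∃ M, ∀ ξ, M ≤ ξ → ∀ x ∈ Icc (0:ℝ) L, |φ (-ξ) x - α * a₁| < ε
  lim_right : ∀ ε > 0, ∃ M, ∀ ξ, M ≤ ξ → ∀ x ∈ Icc (0:ℝ) L, |φ ξ x + d * a₂| < ε
  pde : ∃ zt zx zxx : ℝ → ℝ → ℝ,
    (∀ t x, Zfun s φ t x ≠ 0 → HasDerivAt (fun τ => Zfun s φ τ x) (zt t x) t) ∧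
    (∀ t x, Zfun s φ t x ≠ 0 → HasDerivAt (fun y => Zfun s φ t y) (zx t x) x) ∧
    (∀ t x, Zfun s φ t x ≠ 0 → HasDerivAt (fun y => zx t y) (zxx t x) x) ∧
    ContinuousOn (uncurry zt) {p : ℝ × ℝ | Zfun s φ p.1 p.2 ≠ 0} ∧
    ContinuousOn (uncurry zx) {p : ℝ × ℝ | Zfun s φ p.1 p.2 ≠ 0} ∧
    ContinuousOn (uncurry zxx) {p : ℝ × ℝ | Zfun s φ p.1 p.2 ≠ 0} ∧
    (∀ t x, 0 < Zfun s φ t x →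
      zt t x = zxx t x + Zfun s φ t x * f₁ (Zfun s φ t x / α) x) ∧
    (∀ t x, Zfun s φ t x < 0 →
      zt t x = d * zxx t x + Zfun s φ t x * f₂ (-(Zfun s φ t x) / d) x)

/-- The limiting nonlinearity `η(z, x)`. -/
def eta (d α : ℝ) (f₁ f₂ : ℝ → ℝ → ℝ) (z x : ℝ) : ℝ :=
  f₁ (z / α) x * max z 0 - (1 / d) * f₂ (-z / d) x * (-(min z 0))

/-- A segregated stationary equilibrium. -/
structure SegEquilibrium (L d α : ℝ) (f₁ f₂ : ℝ → ℝ → ℝ) (e : ℝ → ℝ) : Prop where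
  smooth : ContDiff ℝ 2 e
  bdd : ∃ M, ∀ x, |e x| ≤ M
  ode : ∀ x, -(deriv (deriv e) x) = eta d α f₁ f₂ (e x) x
  mono : ∀ x, Antitone (fun n : ℕ => e (x + n * L))
  pos : ∃ x, 0 < e x
  neg : ∃ x, e x < 0
  tail : BddBelow {x | e x < 0} ∨ BddAbove {x | 0 < e x}

/-- The Du–Lin solution on `[x₀, ∞)`: bounded, nonnegative, nonzero, `C²`, vanishing
at `x₀`, solving `-z'' = z f(z, ·)` on `(x₀, ∞)`. -/
structure IsDuLin (x₀ : ℝ) (f : ℝ → ℝ → ℝ) (z : ℝ → ℝ) : Prop where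
  diff1 : ∀ x ∈ Ici x₀, DifferentiableWithinAt ℝ z (Ici x₀) x
  diff2 : ∀ x ∈ Ici x₀,
    DifferentiableWithinAt ℝ (derivWithin z (Ici x₀)) (Ici x₀) x
  cont2 : ContinuousOn (derivWithin (derivWithin z (Ici x₀)) (Ici x₀)) (Ici x₀)
  bdd : ∃ M, ∀ x ∈ Ici x₀, |z x| ≤ M
  nonneg : ∀ x ∈ Ici x₀, 0 ≤ z x
  nonzero : ∃ x ∈ Ici x₀, z x ≠ 0
  zero_at : z x₀ = 0
  ode : ∀ x ∈ Ioi x₀,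
    -(derivWithin (derivWithin z (Ici x₀)) (Ici x₀) x) = z x * f (z x) x

/-- `∂ₜ` of a function of `(t, x)`. -/
def dT (u : ℝ → ℝ → ℝ) (t x : ℝ) : ℝ := deriv (fun τ => u τ x) t

/-- `∂ₓ` of a function of `(t, x)` (or of `(ξ, x)`). -/
def dX (u : ℝ → ℝ → ℝ) (t x : ℝ) : ℝ := deriv (fun y => u t y) x

/-- `∂ₓₓ` of a function of `(t, x)`. -/
def dXX (u : ℝ → ℝ → ℝ) (t x : ℝ) : ℝ := deriv (fun y => dX u t y) x

/-- `∂_ξ` of a profile. -/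
def dXi (φ : ℝ → ℝ → ℝ) (ξ x : ℝ) : ℝ := deriv (fun ζ => φ ζ x) ξ

/-- A pulsating front of the competition system `(P_k)`. -/
structure PkFront (L d α k a₁ a₂ : ℝ) (f₁ f₂ : ℝ → ℝ → ℝ) (c : ℝ)
    (φ₁ φ₂ : ℝ → ℝ → ℝ) : Prop where
  smooth1 : ContDiff ℝ 2 (uncurry φ₁)
  smooth2 : ContDiff ℝ 2 (uncurry φ₂)
  per1 : ∀ ξ x, φ₁ ξ (x + L) = φ₁ ξ x
  per2 : ∀ ξ x, φ₂ ξ (x + L) = φ₂ ξ x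
  mono1 : ∀ x, Antitone (fun ξ => φ₁ ξ x)
  mono2 : ∀ x, Monotone (fun ξ => φ₂ ξ x)
  pde1 : ∀ t x, dT (Zfun c φ₁) t x =
      dXX (Zfun c φ₁) t x + Zfun c φ₁ t x * f₁ (Zfun c φ₁ t x) x
        - k * Zfun c φ₁ t x * Zfun c φ₂ t x
  pde2 : ∀ t x, dT (Zfun c φ₂) t x =
      d * dXX (Zfun c φ₂) t x + Zfun c φ₂ t x * f₂ (Zfun c φ₂ t x) x
        - α * k * Zfun c φ₁ t x * Zfun c φ₂ t x
  lim_left : ∀ ε > 0, ∃ M, ∀ ξ, ξ ≤ M → ∀ x ∈ Icc (0:ℝ) L,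
      |φ₁ ξ x - a₁| < ε ∧ |φ₂ ξ x| < ε
  lim_right : ∀ ε > 0, ∃ M, ∀ ξ, M ≤ ξ → ∀ x ∈ Icc (0:ℝ) L,
      |φ₁ ξ x| < ε ∧ |φ₂ ξ x - a₂| < ε

/-- A positive pulsating front for the scalar equation `∂ₜ z = δ ∂ₓₓ z + z g(z, x)`
connecting `a` to `0` at speed `s`. -/
structure ScalarFront (L δ a : ℝ) (g : ℝ → ℝ → ℝ) (s : ℝ) (ψ : ℝ → ℝ → ℝ) : Prop where
  smooth : ContDiff ℝ 2 (uncurry ψ)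
  per : ∀ ξ x, ψ ξ (x + L) = ψ ξ x
  pos : ∀ ξ x, 0 < ψ ξ x
  pde : ∀ t x, dT (Zfun s ψ) t x =
      δ * dXX (Zfun s ψ) t x + Zfun s ψ t x * g (Zfun s ψ t x) x
  lim_left : ∀ ε > 0, ∃ M, ∀ ξ, ξ ≤ M → ∀ x ∈ Icc (0:ℝ) L, |ψ ξ x - a| < ε
  lim_right : ∀ ε > 0, ∃ M, ∀ ξ, M ≤ ξ → ∀ x ∈ Icc (0:ℝ) L, |ψ ξ x| < ε

/-- `σ(v) = 1` if `v > 0`, `1/d` if `v < 0` (the value at `0` is irrelevant). -/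
def sigmaFun (d v : ℝ) : ℝ := if 0 < v then 1 else if v < 0 then 1 / d else 0

/-- Extra regularity of a segregated pulsating front (established in the paper):
`z = Zfun s φ` is everywhere differentiable in `x` with `∂ₓ z` continuous on `ℝ²` and
negative on the zero set of `z`, and `∂ₜ z` exists off the zero set and has there the
strict sign of `s`. -/
def FrontRegular (s : ℝ) (φ zt zx : ℝ → ℝ → ℝ) : Prop :=
  (∀ t x, HasDerivAt (fun y => Zfun s φ t y) (zx t x) x) ∧
  Continuous (uncurry zx) ∧
  (∀ t x, Zfun s φ t x = 0 → zx t x < 0) ∧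
  (∀ t x, Zfun s φ t x ≠ 0 → HasDerivAt (fun τ => Zfun s φ τ x) (zt t x) t) ∧
  (0 < s → ∀ t x, Zfun s φ t x ≠ 0 → 0 < zt t x) ∧
  (s < 0 → ∀ t x, Zfun s φ t x ≠ 0 → zt t x < 0)

/-- existence of the left limit of `∂ₓ z` at the free boundary, its
nonpositivity, and its local uniform lower bound. -/
theorem seg_front_left_trace_of_dx
    (L d α a₁ a₂ : ℝ) (hL : 0 < L) (hd : 0 < d) (hα : 0 < α)
    (f₁ f₂ : ℝ → ℝ → ℝ) (hf₁ : Admissible L f₁ a₁) (hf₂ : Admissible L f₂ a₂)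
    (s : ℝ) (hs : 0 < s) (φ : ℝ → ℝ → ℝ)
    (hfr : SegFront L d α a₁ a₂ f₁ f₂ s φ)
    (zt zx : ℝ → ℝ → ℝ)
    (hzt : ∀ t x, Zfun s φ t x ≠ 0 → HasDerivAt (fun τ => Zfun s φ τ x) (zt t x) t)
    (hztpos : ∀ t x, Zfun s φ t x ≠ 0 → 0 < zt t x)
    (hzx : ∀ t x, Zfun s φ t x ≠ 0 → HasDerivAt (fun y => Zfun s φ t y) (zx t x) x)
    (Ξ : ℝ → ℝ) (hΞc : Continuous Ξ)
    (hΞ : ∀ t, Zfun s φ t (Ξ t) = 0 ∧ ∀ y, Zfun s φ t y = 0 → y = Ξ t) :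
    ∃ l : ℝ → ℝ,
      (∀ t, Filter.Tendsto (fun x => zx t x)
          (nhdsWithin (Ξ t) (Iio (Ξ t))) (nhds (l t))) ∧
      (∀ t, l t ≤ 0) ∧
      (∀ a b : ℝ, BddBelow (l '' Icc a b)) := by
  obtain ⟨zt', zx', zxx', hzt', hzx', hzxx', hct', hcx', hcxx', hpde1, hpde2⟩ := hfr.pde
  set z : ℝ → ℝ → ℝ := Zfun s φ with hz
  -- continuity of z in x
  have hzct : ∀ t, Continuous fun x => z t x := by
    intro t
    have h1 : Continuous fun x : ℝ => ((x - s * t, x) : ℝ × ℝ) :=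
      (continuous_id.sub continuous_const).prodMk continuous_id
    exact hfr.cont.comp h1
  -- the global bound
  obtain ⟨M, hM⟩ := hfr.bdd
  have hzM : ∀ t x, |z t x| ≤ M := fun t x => hM (x - s * t) x
  -- bound on the reaction term
  obtain ⟨C, hC0, hC⟩ : ∃ C : ℝ, 0 ≤ C ∧ ∀ v x : ℝ, |v| ≤ M → |v * f₁ (v / α) x| ≤ C := by
    have hcf : Continuous (uncurry f₁) := hf₁.smooth.continuous
    have hcont : ContinuousOn (fun p : ℝ × ℝ => |p.1 * f₁ (p.1 / α) p.2|)
        (Icc (-M) M ×ˢ Icc 0 L) := by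
      apply Continuous.continuousOn
      have h2 : Continuous fun p : ℝ × ℝ => f₁ (p.1 / α) p.2 :=
        hcf.comp ((continuous_fst.div_const α).prodMk continuous_snd)
      exact (continuous_fst.mul h2).abs
    have hK : IsCompact ((fun p : ℝ × ℝ => |p.1 * f₁ (p.1 / α) p.2|) ''
        (Icc (-M) M ×ˢ Icc 0 L)) :=
      (isCompact_Icc.prod isCompact_Icc).image_of_continuousOn hcont
    obtain ⟨C, hCub⟩ := hK.bddAbove
    refine ⟨max C 0, le_max_right _ _, ?_⟩
    intro v x hv
    have hper : f₁ (v / α) (x - ⌊x / L⌋ * L) = f₁ (v / α) x :=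
      Function.Periodic.sub_int_mul_eq (fun y => hf₁.periodic (v / α) y) ⌊x / L⌋
    have hr0 : 0 ≤ x - ⌊x / L⌋ * L := Int.sub_floor_div_mul_nonneg x hL
    have hrL : x - ⌊x / L⌋ * L < L := Int.sub_floor_div_mul_lt x hL
    have hmem : ((v, x - ⌊x / L⌋ * L) : ℝ × ℝ) ∈ Icc (-M) M ×ˢ Icc 0 L :=
      ⟨abs_le.1 hv, ⟨hr0, hrL.le⟩⟩
    have hle := hCub (mem_image_of_mem _ hmem)
    simp only at hle
    rw [hper] at hle
    exact le_trans hle (le_max_left _ _)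
  -- unique zero
  have hzne : ∀ t x, x ≠ Ξ t → z t x ≠ 0 := fun t x hne h0 => hne ((hΞ t).2 x h0)
  -- positivity far to the left
  obtain ⟨M₁, hM₁⟩ := hfr.lim_left (α * a₁) (mul_pos hα hf₁.zero_pos)
  have hfarpos : ∀ t x : ℝ, x ≤ s * t - M₁ → 0 < z t x := by
    intro t x hx
    have hξ : M₁ ≤ -(x - s * t) := by linarith
    have hr0 : 0 ≤ x - ⌊x / L⌋ * L := Int.sub_floor_div_mul_nonneg x hL
    have hrL : x - ⌊x / L⌋ * L < L := Int.sub_floor_div_mul_lt x hL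
    have h1 := hM₁ (-(x - s * t)) hξ (x - ⌊x / L⌋ * L) ⟨hr0, hrL.le⟩
    rw [neg_neg] at h1
    have hper : φ (x - s * t) (x - ⌊x / L⌋ * L) = φ (x - s * t) x :=
      Function.Periodic.sub_int_mul_eq (fun y => hfr.per (x - s * t) y) ⌊x / L⌋
    have h2 := (abs_lt.1 h1).1
    have h3 : 0 < φ (x - s * t) (x - ⌊x / L⌋ * L) := by
      have := mul_pos hα hf₁.zero_pos; linarith
    show 0 < φ (x - s * t) x
    rwa [← hper]
  -- positivity to the left of the interface
  have hpos : ∀ t x, x < Ξ t → 0 < z t x := by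
    intro t x hx
    rcases (hzne t x hx.ne).lt_or_gt with hneg | hp
    · exfalso
      set x' := min x (s * t - M₁) - 1 with hx'def
      have hx'x : x' ≤ x := by
        have := min_le_left x (s * t - M₁); simp only [hx'def]; linarith
      have hx'pos : 0 < z t x' := by
        apply hfarpos t x'
        have := min_le_right x (s * t - M₁); simp only [hx'def]; linarith
      have h0mem : (0 : ℝ) ∈ Icc (z t x) (z t x') := ⟨hneg.le, hx'pos.le⟩
      obtain ⟨c, hcmem, hc0⟩ :=
        intermediate_value_Icc' hx'x ((hzct t).continuousOn) h0mem
      have hcx : c = Ξ t := (hΞ t).2 c hc0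
      have hclt : c < Ξ t := lt_of_le_of_lt hcmem.2 hx
      exact absurd hcx hclt.ne
    · exact hp
  -- identifications of derivatives
  have hzxeq : ∀ t x, z t x ≠ 0 → zx t x = zx' t x :=
    fun t x h => (hzx t x h).unique (hzx' t x h)
  have hopen : ∀ t, IsOpen {y | z t y ≠ 0} := by
    intro t
    have he : {y | z t y ≠ 0} = (fun y => z t y) ⁻¹' ({0}ᶜ) := rfl
    rw [he]
    exact isOpen_compl_singleton.preimage (hzct t)
  have hzxx : ∀ t x, z t x ≠ 0 → HasDerivAt (fun y => zx t y) (zxx' t x) x := by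
    intro t x h
    refine (hzxx' t x h).congr_of_eventuallyEq ?_
    filter_upwards [(hopen t).mem_nhds h] with y hy
    exact hzxeq t y hy
  -- the monotone auxiliary function
  set G : ℝ → ℝ → ℝ := fun t x => zx t x + C * x with hG
  have hGder : ∀ t x, x < Ξ t → HasDerivAt (G t) (zxx' t x + C) x := by
    intro t x hx
    have hne : z t x ≠ 0 := (hpos t x hx).ne'
    have h2 : HasDerivAt (fun y : ℝ => C * y) C x := by
      simpa using (hasDerivAt_id x).const_mul C
    exact (hzxx t x hne).add h2
  have hGder_nonneg : ∀ t x, x < Ξ t → 0 ≤ zxx' t x + C := by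
    intro t x hx
    have hne : z t x ≠ 0 := (hpos t x hx).ne'
    have hpde := hpde1 t x (hpos t x hx)
    have hztpos' : 0 < zt' t x := by
      rw [← (hzt t x hne).unique (hzt' t x hne)]
      exact hztpos t x hne
    have hb := (abs_le.1 (hC (z t x) x (hzM t x))).2
    linarith
  have hGmono : ∀ t, MonotoneOn (G t) (Iio (Ξ t)) := by
    intro t
    apply monotoneOn_of_deriv_nonneg (convex_Iio _)
    · intro x hx
      exact ((hGder t x hx).continuousAt).continuousWithinAt
    · rw [interior_Iio]
      intro x hx
      exact ((hGder t x hx).differentiableAt).differentiableWithinAt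
    · rw [interior_Iio]
      intro x hx
      rw [(hGder t x hx).deriv]
      exact hGder_nonneg t x hx
  -- upper bound for G on the left of the interface
  have hub : ∀ t, ∀ x, x < Ξ t → G t x ≤ C * Ξ t := by
    intro t x hx
    by_contra hgt
    push_neg at hgt
    have hmono : MonotoneOn (fun y => z t y) (Ico x (Ξ t)) := by
      apply monotoneOn_of_deriv_nonneg (convex_Ico _ _) ((hzct t).continuousOn)
      · rw [interior_Ico]
        intro y hy
        exact ((hzx t y (hpos t y hy.2).ne').differentiableAt).differentiableWithinAt
      · rw [interior_Ico]
        intro y hy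
        rw [(hzx t y (hpos t y hy.2).ne').deriv]
        have h1 : G t x ≤ G t y :=
          (hGmono t) (mem_Iio.2 hx) (mem_Iio.2 hy.2) hy.1.le
        have h2 : C * y ≤ C * Ξ t := mul_le_mul_of_nonneg_left hy.2.le hC0
        simp only [hG] at h1 hgt
        linarith
    have hlim : Tendsto (fun y => z t y) (𝓝[<] (Ξ t)) (𝓝 0) := by
      have h := ((hzct t).tendsto (Ξ t)).mono_left
        (nhdsWithin_le_nhds (s := Iio (Ξ t)))
      rwa [(hΞ t).1] at h
    have hev : ∀ᶠ y in 𝓝[<] (Ξ t), z t x ≤ z t y := by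
      filter_upwards [Ioo_mem_nhdsLT hx] with y hy
      exact hmono ⟨le_refl x, hx⟩ ⟨hy.1.le, hy.2⟩ hy.1.le
    exact absurd (ge_of_tendsto hlim hev) (not_le.2 (hpos t x hx))
  have hbddA : ∀ t, BddAbove (G t '' Iio (Ξ t)) := by
    intro t
    refine ⟨C * Ξ t, ?_⟩
    rintro y ⟨x, hx, rfl⟩
    exact hub t x hx
  refine ⟨fun t => sSup (G t '' Iio (Ξ t)) - C * Ξ t, ?_, ?_, ?_⟩
  · -- the limit
    intro t
    have h1 : Tendsto (G t) (𝓝[<] Ξ t) (𝓝 (sSup (G t '' Iio (Ξ t)))) :=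
      (hGmono t).tendsto_nhdsLT (hbddA t)
    have h2 : Tendsto (fun x : ℝ => C * x) (𝓝[<] Ξ t) (𝓝 (C * Ξ t)) :=
      ((continuous_const.mul continuous_id).tendsto (Ξ t)).mono_left nhdsWithin_le_nhds
    have heq : (fun x => zx t x) = fun x => G t x - C * x := by
      funext x; simp only [hG]; ring
    rw [heq]
    exact h1.sub h2
  · -- nonpositivity
    intro t
    have hne : (G t '' Iio (Ξ t)).Nonempty :=
      ⟨G t (Ξ t - 1), mem_image_of_mem _ (by simp)⟩
    have hle : sSup (G t '' Iio (Ξ t)) ≤ C * Ξ t := by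
      apply csSup_le hne
      rintro y ⟨x, hx, rfl⟩
      exact hub t x hx
    show sSup (G t '' Iio (Ξ t)) - C * Ξ t ≤ 0
    linarith
  · -- local lower bound
    intro a b
    by_cases hab : a ≤ b
    · obtain ⟨t₁, ht₁mem, ht₁⟩ :=
        isCompact_Icc.exists_isMinOn ⟨a, left_mem_Icc.2 hab⟩ hΞc.continuousOn
      obtain ⟨t₂, ht₂mem, ht₂⟩ :=
        isCompact_Icc.exists_isMaxOn ⟨a, left_mem_Icc.2 hab⟩ hΞc.continuousOn
      set x₀ := Ξ t₁ - 1 with hx₀def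
      have hx₀ : ∀ t ∈ Icc a b, x₀ < Ξ t := by
        intro t ht
        have := isMinOn_iff.1 ht₁ t ht
        simp only [hx₀def]; linarith
      have hKsub : (Icc a b ×ˢ ({x₀} : Set ℝ)) ⊆ {p : ℝ × ℝ | Zfun s φ p.1 p.2 ≠ 0} := by
        rintro ⟨t, y⟩ ⟨ht, hy⟩
        simp only [mem_singleton_iff] at hy
        subst hy
        exact (hpos t x₀ (hx₀ t ht)).ne'
      have hKc : IsCompact ((fun p : ℝ × ℝ => zx' p.1 p.2) '' (Icc a b ×ˢ {x₀})) :=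
        (isCompact_Icc.prod isCompact_singleton).image_of_continuousOn (hcx'.mono hKsub)
      obtain ⟨B, hB⟩ := hKc.bddBelow
      refine ⟨B + C * x₀ - C * Ξ t₂, ?_⟩
      rintro y ⟨t, ht, rfl⟩
      have hne : z t x₀ ≠ 0 := (hpos t x₀ (hx₀ t ht)).ne'
      have h1 : G t x₀ ≤ sSup (G t '' Iio (Ξ t)) :=
        le_csSup (hbddA t) (mem_image_of_mem _ (mem_Iio.2 (hx₀ t ht)))
      have h2 : zx t x₀ = zx' t x₀ := hzxeq t x₀ hne
      have h3 : B ≤ zx' t x₀ :=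
        hB (mem_image_of_mem _ (Set.mk_mem_prod ht (Set.mem_singleton _)))
      have h4 : Ξ t ≤ Ξ t₂ := isMaxOn_iff.1 ht₂ t ht
      have h5 : C * Ξ t ≤ C * Ξ t₂ := mul_le_mul_of_nonneg_left h4 hC0
      simp only [hG] at h1
      show B + C * x₀ - C * Ξ t₂ ≤ sSup (G t '' Iio (Ξ t)) - C * Ξ t
      linarith
    · rw [Icc_eq_empty hab]
      simp
end
end

section
/- Fix a period L > 0, parameters d, α > 0 and admissible nonlinearities f₁, f₂ with zeros a₁, a₂. Let φ be a regular segregated pulsating front with speed s ≠ 0, set z(t,x) = φ(x − st, x), and assume that the zero set z⁻¹({0}) is the graph {(t, Ξ(t)) : t ∈ ℝ} of a continuous bijection Ξ : ℝ → ℝ. Then the function x ↦ x − s Ξ⁻¹(x) is continuous and L-periodic, and {(x − s Ξ⁻¹(x), x) : x ∈ ℝ} = φ⁻¹({0}). -/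
open MeasureTheory Set Filter Topology Function

noncomputable section

section
variable {Ξ Ψ : ℝ → ℝ}

lemma aux_inv_continuous (hc : Continuous Ξ) (hb : Function.Bijective Ξ)
    (hl : Function.LeftInverse Ψ Ξ) : Continuous Ψ := by
  rcases hc.strictMono_of_inj hb.1 with hm | ha
  · let e := StrictMono.orderIsoOfSurjective Ξ hm hb.2
    have hΨ : Ψ = ⇑e.symm := funext fun x => by
      have h1 : Ξ (e.symm x) = x := e.apply_symm_apply x
      calc Ψ x = Ψ (Ξ (e.symm x)) := by rw [h1]
        _ = e.symm x := hl _
    rw [hΨ]; exact e.symm.continuous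
  · have hm : StrictMono (fun t => -(Ξ t)) := fun a b hab => neg_lt_neg (ha hab)
    have hsurj : Function.Surjective (fun t => -(Ξ t)) := fun y => by
      obtain ⟨t, ht⟩ := hb.2 (-y); exact ⟨t, by simp [ht]⟩
    let e := StrictMono.orderIsoOfSurjective _ hm hsurj
    have hΨ : Ψ = fun x => e.symm (-x) := funext fun x => by
      have h1 : -(Ξ (e.symm (-x))) = -x := e.apply_symm_apply (-x)
      have h2 : Ξ (e.symm (-x)) = x := by linarith [neg_eq_iff_eq_neg.mp h1]
      calc Ψ x = Ψ (Ξ (e.symm (-x))) := by rw [h2]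
        _ = e.symm (-x) := hl _
    rw [hΨ]; exact e.symm.continuous.comp continuous_neg

end

/-- the free boundary is located near the line `x = s t + Ξ(0)`:
`x ↦ x - s Ξ⁻¹(x)` is continuous and `L`-periodic, and its graph (in traveling
coordinates) is exactly the zero set of the profile. -/
theorem seg_front_free_boundary_periodic
    (L d α a₁ a₂ : ℝ) (hL : 0 < L) (hd : 0 < d) (hα : 0 < α)
    (f₁ f₂ : ℝ → ℝ → ℝ) (hf₁ : Admissible L f₁ a₁) (hf₂ : Admissible L f₂ a₂)
    (s : ℝ) (hs : s ≠ 0) (φ : ℝ → ℝ → ℝ)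
    (hfr : SegFront L d α a₁ a₂ f₁ f₂ s φ)
    (Ξ Ψ : ℝ → ℝ) (hΞc : Continuous Ξ) (hΞbij : Function.Bijective Ξ)
    (hleft : Function.LeftInverse Ψ Ξ) (hright : Function.RightInverse Ψ Ξ)
    (hgraph : ∀ t x, Zfun s φ t x = 0 ↔ x = Ξ t) :
    Continuous (fun x => x - s * Ψ x) ∧
    (∀ x : ℝ, (x + L) - s * Ψ (x + L) = x - s * Ψ x) ∧
    (Set.range fun x : ℝ => ((x - s * Ψ x, x) : ℝ × ℝ))
      = {p : ℝ × ℝ | φ p.1 p.2 = 0} := by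
  have hXi : ∀ t, Ξ (t - L / s) = Ξ t - L := by
    intro t
    have h0 : Zfun s φ t (Ξ t) = 0 := (hgraph t (Ξ t)).mpr rfl
    have h1 : Zfun s φ (t - L / s) (Ξ t - L) = 0 := by
      have harg : Ξ t - L - s * (t - L / s) = Ξ t - s * t := by
        field_simp; ring
      have hper := hfr.per (Ξ t - s * t) (Ξ t - L)
      simp only [Zfun] at h0 ⊢
      rw [harg]
      rw [show Ξ t - L + L = Ξ t by ring] at hper
      rw [← hper]; exact h0
    have := (hgraph (t - L / s) (Ξ t - L)).mp h1
    linarith [this]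
  have hΨper : ∀ x, Ψ (x + L) = Ψ x + L / s := by
    intro x
    have h1 := hXi (Ψ x + L / s)
    rw [show Ψ x + L / s - L / s = Ψ x by ring, hright x] at h1
    have h2 : Ξ (Ψ x + L / s) = x + L := by linarith
    calc Ψ (x + L) = Ψ (Ξ (Ψ x + L / s)) := by rw [h2]
      _ = Ψ x + L / s := hleft _
  refine ⟨?_, ?_, ?_⟩
  · exact continuous_id.sub (continuous_const.mul
      (aux_inv_continuous hΞc hΞbij hleft))
  · intro x
    rw [hΨper x]
    field_simp
    ring
  · ext ⟨ξ, x⟩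
    simp only [Set.mem_range, Set.mem_setOf_eq, Prod.mk.injEq]
    constructor
    · rintro ⟨y, hy1, rfl⟩
      have hz0 : Zfun s φ (Ψ y) y = 0 := (hgraph (Ψ y) y).mpr (hright y).symm
      simp only [Zfun] at hz0
      rw [← hy1]; exact hz0
    · intro h
      refine ⟨x, ?_, rfl⟩
      have hz : Zfun s φ ((x - ξ) / s) x = 0 := by
        simp only [Zfun]
        rw [show x - s * ((x - ξ) / s) = ξ by field_simp; ring]
        exact h
      have hx := (hgraph ((x - ξ) / s) x).mp hz
      have hΨx : Ψ x = (x - ξ) / s := by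
        have h5 := hleft ((x - ξ) / s)
        rw [← hx] at h5; exact h5
      have hc : s * ((x - ξ) / s) = x - ξ := by field_simp
      rw [hΨx, hc]; ring
end
end

section
/- Fix a period L > 0, parameters d, α > 0 with d ≠ 1, and admissible nonlinearities f₁, f₂ with zeros a₁, a₂. Let φ be a regular segregated pulsating front with speed s ≠ 0 and set z(t,x) = φ(x − st, x). Assume additionally that: z is differentiable on ℝ² with ∂ₜz and ∂ₓz continuous on all of ℝ²; the zero set z⁻¹({0}) is the graph of a C¹ function Ξ : ℝ → ℝ; ∂ₓz(t, Ξ(t)) ≠ 0 for all t; and for each t the one-sided limits of ∂ₓₓz(t, y) as y → Ξ(t)⁻ and y → Ξ(t)⁺ exist. Then for every t ∈ ℝ: Ξ'(t) = (d/(1 − d)) · [ lim_{ε→0⁺} ( ∂ₓₓz(t, Ξ(t) − ε) − ∂ₓₓz(t, Ξ(t) + ε) ) ] / ∂ₓz(t, Ξ(t)). -/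
open MeasureTheory Set Filter Topology Function

noncomputable section

/-- the formula relating `Ξ'` to the jump of `∂ₓₓ z` across the free
boundary, when `d ≠ 1`. -/
theorem seg_front_free_boundary_derivative_formula
    (L d α a₁ a₂ : ℝ) (hL : 0 < L) (hd : 0 < d) (hα : 0 < α) (hd1 : d ≠ 1)
    (f₁ f₂ : ℝ → ℝ → ℝ) (hf₁ : Admissible L f₁ a₁) (hf₂ : Admissible L f₂ a₂)
    (s : ℝ) (hs : s ≠ 0) (φ : ℝ → ℝ → ℝ)
    (hfr : SegFront L d α a₁ a₂ f₁ f₂ s φ)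
    (zt zx zxx : ℝ → ℝ → ℝ)
    (hzt : ∀ t x, HasDerivAt (fun τ => Zfun s φ τ x) (zt t x) t)
    (hzx : ∀ t x, HasDerivAt (fun y => Zfun s φ t y) (zx t x) x)
    (hztc : Continuous (uncurry zt))
    (hzxc : Continuous (uncurry zx))
    (hzxx : ∀ t x, Zfun s φ t x ≠ 0 → HasDerivAt (fun y => zx t y) (zxx t x) x)
    (Ξ Ξ' : ℝ → ℝ) (hΞ : ∀ t, HasDerivAt Ξ (Ξ' t) t) (hΞ'c : Continuous Ξ')
    (hgraph : ∀ t x, Zfun s φ t x = 0 ↔ x = Ξ t)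
    (hzxne : ∀ t, zx t (Ξ t) ≠ 0)
    (hlim : ∀ t, (∃ l, Filter.Tendsto (fun y => zxx t y)
          (nhdsWithin (Ξ t) (Iio (Ξ t))) (nhds l))
        ∧ (∃ l, Filter.Tendsto (fun y => zxx t y)
          (nhdsWithin (Ξ t) (Ioi (Ξ t))) (nhds l))) :
    ∀ t : ℝ, ∃ J : ℝ,
      Filter.Tendsto (fun ε => zxx t (Ξ t - ε) - zxx t (Ξ t + ε))
        (nhdsWithin 0 (Ioi (0 : ℝ))) (nhds J) ∧
      Ξ' t = d / (1 - d) * J / zx t (Ξ t) := by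

  intro t
  obtain ⟨⟨lm, hlm⟩, ⟨lp, hlp⟩⟩ := hlim t
  set X := Ξ t with hX
  -- continuity of z in the second variable (for the fixed t and any t')
  have hzcont : ∀ t' : ℝ, Continuous fun y => Zfun s φ t' y := fun t' =>
    continuous_iff_continuousAt.mpr fun y => (hzx t' y).continuousAt
  -- z vanishes on the graph
  have hz0 : ∀ τ, Zfun s φ τ (Ξ τ) = 0 := fun τ => (hgraph τ (Ξ τ)).mpr rfl
  -- far-left positivity
  obtain ⟨M₁, hM₁⟩ := hfr.lim_left (α * a₁) (mul_pos hα hf₁.zero_pos)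
  have hposfar : ∀ y : ℝ, y ≤ s * t - M₁ → 0 < Zfun s φ t y := by
    intro y hy
    have hper : Function.Periodic (fun x => φ (y - s * t) x) L := fun x => hfr.per _ x
    set x₀ := y - (⌊y / L⌋ : ℝ) * L with hx₀
    have hyL : y / L * L = y := div_mul_cancel₀ y hL.ne'
    have h1 : ((⌊y / L⌋ : ℝ)) * L ≤ y := by nlinarith [Int.floor_le (y / L)]
    have h2 : y < ((⌊y / L⌋ : ℝ) + 1) * L := by nlinarith [Int.lt_floor_add_one (y / L)]
    have hx₀mem : x₀ ∈ Icc (0 : ℝ) L := ⟨by simp only [hx₀]; linarith, by simp only [hx₀]; linarith⟩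
    have heq : Zfun s φ t y = φ (y - s * t) x₀ := by
      show φ (y - s * t) y = φ (y - s * t) x₀
      rw [hx₀]
      exact (hper.sub_int_mul_eq (⌊y / L⌋)).symm
    have hξ : M₁ ≤ s * t - y := by linarith
    have habs := hM₁ (s * t - y) hξ x₀ hx₀mem
    have hneg : -(s * t - y) = y - s * t := by ring
    rw [hneg] at habs
    have := abs_lt.mp habs
    rw [heq]; linarith [this.1]
  -- far-right negativity
  obtain ⟨M₂, hM₂⟩ := hfr.lim_right (d * a₂) (mul_pos hd hf₂.zero_pos)
  have hnegfar : ∀ y : ℝ, s * t + M₂ ≤ y → Zfun s φ t y < 0 := by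
    intro y hy
    have hper : Function.Periodic (fun x => φ (y - s * t) x) L := fun x => hfr.per _ x
    set x₀ := y - (⌊y / L⌋ : ℝ) * L with hx₀
    have hyL : y / L * L = y := div_mul_cancel₀ y hL.ne'
    have h1 : ((⌊y / L⌋ : ℝ)) * L ≤ y := by nlinarith [Int.floor_le (y / L)]
    have h2 : y < ((⌊y / L⌋ : ℝ) + 1) * L := by nlinarith [Int.lt_floor_add_one (y / L)]
    have hx₀mem : x₀ ∈ Icc (0 : ℝ) L := ⟨by simp only [hx₀]; linarith, by simp only [hx₀]; linarith⟩
    have heq : Zfun s φ t y = φ (y - s * t) x₀ := by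
      show φ (y - s * t) y = φ (y - s * t) x₀
      rw [hx₀]
      exact (hper.sub_int_mul_eq (⌊y / L⌋)).symm
    have hξ : M₂ ≤ y - s * t := by linarith
    have habs := hM₂ (y - s * t) hξ x₀ hx₀mem
    have := abs_lt.mp habs
    rw [heq]; linarith [this.2]
  -- sign of z on either side of the graph
  have hsignP : ∀ y, y < Ξ t → 0 < Zfun s φ t y := by
    intro y hy
    by_contra hnp
    push_neg at hnp
    have hne0 : Zfun s φ t y ≠ 0 := fun h => absurd ((hgraph t y).mp h) (ne_of_lt hy)
    have hneg : Zfun s φ t y < 0 := lt_of_le_of_ne hnp hne0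
    set y₀ := min y (s * t - M₁) - 1 with hy₀def
    have hy₀pos : 0 < Zfun s φ t y₀ := by
      refine hposfar y₀ ?_
      have := min_le_right y (s * t - M₁); simp only [hy₀def]; linarith
    have hy₀y : y₀ ≤ y := by
      have := min_le_left y (s * t - M₁); simp only [hy₀def]; linarith
    have hsub := intermediate_value_Icc' hy₀y ((hzcont t).continuousOn)
    have h0mem : (0 : ℝ) ∈ Icc (Zfun s φ t y) (Zfun s φ t y₀) := ⟨hneg.le, hy₀pos.le⟩
    obtain ⟨x, hx, hx0⟩ := hsub h0mem
    have hxΞ := (hgraph t x).mp hx0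
    rw [hxΞ] at hx
    linarith [hx.2]
  have hsignN : ∀ y, Ξ t < y → Zfun s φ t y < 0 := by
    intro y hy
    by_contra hnp
    push_neg at hnp
    have hne0 : Zfun s φ t y ≠ 0 := fun h => absurd ((hgraph t y).mp h) (ne_of_gt hy)
    have hpos : 0 < Zfun s φ t y := lt_of_le_of_ne hnp (Ne.symm hne0)
    set y₁ := max y (s * t + M₂) + 1 with hy₁def
    have hy₁neg : Zfun s φ t y₁ < 0 := by
      refine hnegfar y₁ ?_
      have := le_max_right y (s * t + M₂); simp only [hy₁def]; linarith
    have hyy₁ : y ≤ y₁ := by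
      have := le_max_left y (s * t + M₂); simp only [hy₁def]; linarith
    have hsub := intermediate_value_Icc' hyy₁ ((hzcont t).continuousOn)
    have h0mem : (0 : ℝ) ∈ Icc (Zfun s φ t y₁) (Zfun s φ t y) := ⟨hy₁neg.le, hpos.le⟩
    obtain ⟨x, hx, hx0⟩ := hsub h0mem
    have hxΞ := (hgraph t x).mp hx0
    rw [hxΞ] at hx
    linarith [hx.1]
  -- the PDE holds with our zt, zxx off the zero set
  obtain ⟨zt', zx', zxx', ht', hx', hxx', _, _, _, hppos, hpneg⟩ := hfr.pde
  have hzt_eq : ∀ t' y, Zfun s φ t' y ≠ 0 → zt' t' y = zt t' y :=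
    fun t' y h => (ht' t' y h).unique (hzt t' y)
  have hzx_eq : ∀ t' y, Zfun s φ t' y ≠ 0 → zx' t' y = zx t' y :=
    fun t' y h => (hx' t' y h).unique (hzx t' y)
  have hzxx_eq : ∀ t' y, Zfun s φ t' y ≠ 0 → zxx' t' y = zxx t' y := by
    intro t' y h
    refine HasDerivAt.unique ?_ (hzxx t' y h)
    refine (hxx' t' y h).congr_of_eventuallyEq ?_
    have hopen : IsOpen {y' | Zfun s φ t' y' ≠ 0} :=
      isOpen_compl_singleton.preimage (hzcont t')
    filter_upwards [hopen.mem_nhds h] with y' hy'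
    exact (hzx_eq t' y' hy').symm
  have pdeP : ∀ y, 0 < Zfun s φ t y →
      zt t y = zxx t y + Zfun s φ t y * f₁ (Zfun s φ t y / α) y := by
    intro y h
    have := hppos t y h
    rwa [hzt_eq t y h.ne', hzxx_eq t y h.ne'] at this
  have pdeN : ∀ y, Zfun s φ t y < 0 →
      zt t y = d * zxx t y + Zfun s φ t y * f₂ (-(Zfun s φ t y) / d) y := by
    intro y h
    have := hpneg t y h
    rwa [hzt_eq t y h.ne, hzxx_eq t y h.ne] at this
  -- limits of z, zt along each side of the free boundary
  have hid_lt : Filter.Tendsto (fun y : ℝ => y) (nhdsWithin X (Iio X)) (nhds X) :=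
    tendsto_id.mono_left nhdsWithin_le_nhds
  have hid_gt : Filter.Tendsto (fun y : ℝ => y) (nhdsWithin X (Ioi X)) (nhds X) :=
    tendsto_id.mono_left nhdsWithin_le_nhds
  have hz_lt : Filter.Tendsto (fun y => Zfun s φ t y) (nhdsWithin X (Iio X)) (nhds 0) := by
    have := ((hzcont t).tendsto X).mono_left (nhdsWithin_le_nhds (s := Iio X))
    rwa [hz0 t] at this
  have hz_gt : Filter.Tendsto (fun y => Zfun s φ t y) (nhdsWithin X (Ioi X)) (nhds 0) := by
    have := ((hzcont t).tendsto X).mono_left (nhdsWithin_le_nhds (s := Ioi X))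
    rwa [hz0 t] at this
  have hf₁c : Continuous (uncurry f₁) := hf₁.smooth.continuous
  have hf₂c : Continuous (uncurry f₂) := hf₂.smooth.continuous
  have hzt_lt : Filter.Tendsto (fun y => zt t y) (nhdsWithin X (Iio X)) (nhds (zt t X)) := by
    have hpair : Filter.Tendsto (fun y : ℝ => ((t : ℝ), y)) (nhdsWithin X (Iio X)) (nhds (t, X)) :=
      tendsto_const_nhds.prodMk_nhds hid_lt
    exact (hztc.tendsto (t, X)).comp hpair
  have hzt_gt : Filter.Tendsto (fun y => zt t y) (nhdsWithin X (Ioi X)) (nhds (zt t X)) := by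
    have hpair : Filter.Tendsto (fun y : ℝ => ((t : ℝ), y)) (nhdsWithin X (Ioi X)) (nhds (t, X)) :=
      tendsto_const_nhds.prodMk_nhds hid_gt
    exact (hztc.tendsto (t, X)).comp hpair
  -- left limit identification: zt t X = lm
  have eqL : zt t X = lm := by
    have hterm : Filter.Tendsto (fun y => Zfun s φ t y * f₁ (Zfun s φ t y / α) y)
        (nhdsWithin X (Iio X)) (nhds (0 * f₁ (0 / α) X)) := by
      refine Filter.Tendsto.mul hz_lt ?_
      exact (hf₁c.tendsto (0 / α, X)).comp ((hz_lt.div_const α).prodMk_nhds hid_lt)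
    have hRHS : Filter.Tendsto (fun y => zxx t y + Zfun s φ t y * f₁ (Zfun s φ t y / α) y)
        (nhdsWithin X (Iio X)) (nhds (lm + 0 * f₁ (0 / α) X)) := hlm.add hterm
    have hLHS : Filter.Tendsto (fun y => zt t y) (nhdsWithin X (Iio X))
        (nhds (lm + 0 * f₁ (0 / α) X)) := by
      refine hRHS.congr' ?_
      filter_upwards [self_mem_nhdsWithin] with y hy
      exact (pdeP y (hsignP y hy)).symm
    have := tendsto_nhds_unique hzt_lt hLHS
    rw [this]; ring
  -- right limit identification: zt t X = d * lp
  have eqR : zt t X = d * lp := by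
    have hterm : Filter.Tendsto (fun y => Zfun s φ t y * f₂ (-(Zfun s φ t y) / d) y)
        (nhdsWithin X (Ioi X)) (nhds (0 * f₂ (-(0 : ℝ) / d) X)) := by
      refine Filter.Tendsto.mul hz_gt ?_
      exact (hf₂c.tendsto (-(0 : ℝ) / d, X)).comp ((hz_gt.neg.div_const d).prodMk_nhds hid_gt)
    have hRHS : Filter.Tendsto (fun y => d * zxx t y + Zfun s φ t y * f₂ (-(Zfun s φ t y) / d) y)
        (nhdsWithin X (Ioi X)) (nhds (d * lp + 0 * f₂ (-(0 : ℝ) / d) X)) :=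
      (hlp.const_mul d).add hterm
    have hLHS : Filter.Tendsto (fun y => zt t y) (nhdsWithin X (Ioi X))
        (nhds (d * lp + 0 * f₂ (-(0 : ℝ) / d) X)) := by
      refine hRHS.congr' ?_
      filter_upwards [self_mem_nhdsWithin] with y hy
      exact (pdeN y (hsignN y hy)).symm
    have := tendsto_nhds_unique hzt_gt hLHS
    rw [this]; ring
  -- implicit differentiation via MVT: zt t X = -(zx t X * Ξ' t)
  have mvt : ∀ τ, τ ≠ t → ∃ c, |c - t| ≤ |τ - t| ∧
      zt c (Ξ τ) * (τ - t) = Zfun s φ τ (Ξ τ) - Zfun s φ t (Ξ τ) := by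
    intro τ hτ
    rcases lt_or_gt_of_ne hτ with h | h
    · obtain ⟨c, hc, hceq⟩ := exists_hasDerivAt_eq_slope (fun u => Zfun s φ u (Ξ τ))
        (fun u => zt u (Ξ τ)) h
        (fun u _ => (hzt u (Ξ τ)).continuousAt.continuousWithinAt)
        (fun u _ => hzt u (Ξ τ))
      refine ⟨c, ?_, ?_⟩
      · rw [abs_of_nonpos (by linarith [hc.2] : c - t ≤ 0),
          abs_of_nonpos (by linarith : τ - t ≤ 0)]
        linarith [hc.1]
      · have hne : t - τ ≠ 0 := by intro h'; apply hτ; linarith [sub_eq_zero.mp h']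
        field_simp at hceq
        linear_combination (-1 : ℝ) * hceq
    · obtain ⟨c, hc, hceq⟩ := exists_hasDerivAt_eq_slope (fun u => Zfun s φ u (Ξ τ))
        (fun u => zt u (Ξ τ)) h
        (fun u _ => (hzt u (Ξ τ)).continuousAt.continuousWithinAt)
        (fun u _ => hzt u (Ξ τ))
      refine ⟨c, ?_, ?_⟩
      · rw [abs_of_nonneg (by linarith [hc.1] : (0:ℝ) ≤ c - t),
          abs_of_nonneg (by linarith : (0:ℝ) ≤ τ - t)]
        linarith [hc.2]
      · have hne : τ - t ≠ 0 := sub_ne_zero.mpr hτ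
        field_simp at hceq
        linear_combination hceq
  choose! c hc1 hc2 using mvt
  have hΞcont : Continuous Ξ :=
    continuous_iff_continuousAt.mpr fun τ => (hΞ τ).continuousAt
  have hctend : Filter.Tendsto c (nhdsWithin t {t}ᶜ) (nhds t) := by
    rw [tendsto_iff_dist_tendsto_zero]
    refine squeeze_zero' (g := fun τ : ℝ => dist τ t) ?_ ?_ ?_
    · exact Filter.Eventually.of_forall fun τ => dist_nonneg
    · filter_upwards [self_mem_nhdsWithin] with τ hτ
      have := hc1 τ hτ
      simpa [Real.dist_eq] using this
    · have : Filter.Tendsto (fun τ : ℝ => dist τ t) (nhds t) (nhds (dist t t)) :=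
        (continuous_id.dist continuous_const).tendsto t
      rw [dist_self] at this
      exact this.mono_left nhdsWithin_le_nhds
  have hq : Filter.Tendsto (fun τ => zt (c τ) (Ξ τ)) (nhdsWithin t {t}ᶜ) (nhds (zt t X)) := by
    have hpair : Filter.Tendsto (fun τ => (c τ, Ξ τ)) (nhdsWithin t {t}ᶜ) (nhds (t, X)) :=
      hctend.prodMk_nhds (((hΞcont.tendsto t).mono_left nhdsWithin_le_nhds))
    exact (hztc.tendsto (t, X)).comp hpair
  have hder : HasDerivAt (fun τ => Zfun s φ t (Ξ τ)) (zx t X * Ξ' t) t :=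
    (hzx t (Ξ t)).comp t (hΞ t)
  have hslope : Filter.Tendsto (slope (fun τ => Zfun s φ t (Ξ τ)) t)
      (nhdsWithin t {t}ᶜ) (nhds (zx t X * Ξ' t)) := hasDerivAt_iff_tendsto_slope.mp hder
  have key : zt t X = -(zx t X * Ξ' t) := by
    have h2 : Filter.Tendsto (fun τ => zt (c τ) (Ξ τ)) (nhdsWithin t {t}ᶜ)
        (nhds (-(zx t X * Ξ' t))) := by
      refine hslope.neg.congr' ?_
      filter_upwards [self_mem_nhdsWithin] with τ hτ
      have hτne : τ ≠ t := hτ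
      have heq := hc2 τ hτne
      rw [hz0 τ] at heq
      have hne : τ - t ≠ 0 := sub_ne_zero.mpr hτne
      simp only [slope_def_field, hz0]
      field_simp
      linear_combination (-1 : ℝ) * heq
    exact tendsto_nhds_unique hq h2
  -- assemble
  refine ⟨lm - lp, ?_, ?_⟩
  · have hleft : Filter.Tendsto (fun ε : ℝ => X - ε) (nhdsWithin 0 (Ioi (0:ℝ)))
        (nhdsWithin X (Iio X)) := by
      refine tendsto_nhdsWithin_of_tendsto_nhds_of_eventually_within _ ?_ ?_
      · have : Filter.Tendsto (fun ε : ℝ => X - ε) (nhds 0) (nhds (X - 0)) :=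
          tendsto_const_nhds.sub tendsto_id
        rw [sub_zero] at this
        exact this.mono_left nhdsWithin_le_nhds
      · filter_upwards [self_mem_nhdsWithin] with ε hε
        exact sub_lt_self X hε
    have hright : Filter.Tendsto (fun ε : ℝ => X + ε) (nhdsWithin 0 (Ioi (0:ℝ)))
        (nhdsWithin X (Ioi X)) := by
      refine tendsto_nhdsWithin_of_tendsto_nhds_of_eventually_within _ ?_ ?_
      · have : Filter.Tendsto (fun ε : ℝ => X + ε) (nhds 0) (nhds (X + 0)) :=
          tendsto_const_nhds.add tendsto_id
        rw [add_zero] at this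
        exact this.mono_left nhdsWithin_le_nhds
      · filter_upwards [self_mem_nhdsWithin] with ε hε
        exact lt_add_of_pos_right X hε
    exact (hlm.comp hleft).sub (hlp.comp hright)
  · have hxne := hzxne t
    have hdne : d ≠ 0 := hd.ne'
    have h1d : (1 : ℝ) - d ≠ 0 := sub_ne_zero.mpr (Ne.symm hd1)
    rw [← hX] at hxne
    field_simp
    -- goal: Ξ' t * ((1 - d) * zx t X) = d * (lm - lp)  (up to arrangement)
    have hlm' : lm = zt t X := eqL.symm
    have hlp' : lp = zt t X / d := by field_simp [eqR]; rw [eqR]; ring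
    rw [hlm', hlp']
    field_simp
    linear_combination (1 - d) * key
end
end

section
/- Fix a period L > 0, parameters d, α > 0 and admissible nonlinearities f₁, f₂ with zeros a₁, a₂. Every segregated stationary equilibrium e satisfies −d a₂ < e(x) < α a₁ for all x ∈ ℝ. -/
open MeasureTheory Set Filter Topology Function

noncomputable section

lemma step_iter {u : ℝ → ℝ} {L : ℝ} (H3 : ∀ x, u (x + L) ≤ u x) :
    ∀ (n : ℕ) (x : ℝ), u (x + n * L) ≤ u x := by
  intro n
  induction n with
  | zero => intro x; simp
  | succ n ih =>
      intro x
      have h1 : x + ((n : ℝ) + 1) * L = (x + n * L) + L := by ring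
      push_cast
      rw [h1]
      exact le_trans (H3 _) (ih x)

lemma no_pos_tail {u : ℝ → ℝ} {L : ℝ} (hL : 0 < L) (H3 : ∀ x, u (x + L) ≤ u x)
    (H4 : ∃ x, u x < 0) : ∀ x₀ : ℝ, ∃ y, x₀ ≤ y ∧ u y ≤ 0 := by
  obtain ⟨x₁, hx₁⟩ := H4
  intro x₀
  obtain ⟨n, hn⟩ := exists_nat_ge ((x₀ - x₁) / L)
  refine ⟨x₁ + n * L, ?_, (step_iter H3 n x₁).trans hx₁.le⟩
  have : x₀ - x₁ ≤ n * L := by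
    rw [div_le_iff₀ hL] at hn
    linarith
  linarith

lemma key_lemma (u : ℝ → ℝ) (L b K M : ℝ) (hL : 0 < L) (hb : 0 < b) (hK : 0 ≤ K)
    (hu : ContDiff ℝ 2 u) (hM : ∀ x, |u x| ≤ M)
    (H1 : ∀ x, b < u x → 0 ≤ deriv (deriv u) x)
    (H2 : ∀ x, 0 < u x → u x ≤ b →
      -(K * (b - u x)) ≤ deriv (deriv u) x ∧ deriv (deriv u) x ≤ 0)
    (H3 : ∀ x, u (x + L) ≤ u x)
    (H4 : ∃ x, u x < 0) :
    ∀ x, u x < b := by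
  have ucont : Continuous u := hu.continuous
  have udiff : Differentiable ℝ u := hu.differentiable (by norm_num)
  have hu' : ContDiff ℝ 1 (deriv u) := by
    have h := (contDiff_succ_iff_deriv (n := 1)).mp (by exact_mod_cast hu)
    exact h.2.2
  have u'diff : Differentiable ℝ (deriv u) := hu'.differentiable (by norm_num)
  have u'cont : Continuous (deriv u) := u'diff.continuous
  -- Step 1 : u ≤ b everywhere
  have hub : ∀ x, u x ≤ b := by
    by_contra hcon
    push_neg at hcon
    obtain ⟨x₀, hx₀⟩ := hcon
    obtain ⟨y₀, hy₀x, hy₀⟩ := no_pos_tail hL H3 H4 x₀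
    -- the right endpoint
    set T : Set ℝ := {y | x₀ ≤ y ∧ u y ≤ b} with hT
    have hTclosed : IsClosed T := by
      have : T = Ici x₀ ∩ u ⁻¹' (Iic b) := by
        ext z; simp [hT, and_comm]
      rw [this]
      exact isClosed_Ici.inter (isClosed_Iic.preimage ucont)
    have hTne : T.Nonempty := ⟨y₀, hy₀x, hy₀.trans hb.le⟩
    have hTbdd : BddBelow T := ⟨x₀, fun z hz => hz.1⟩
    set q := sInf T with hq
    have hqT : q ∈ T := hTclosed.csInf_mem hTne hTbdd
    have hq1 : x₀ ≤ q := hqT.1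
    have hq2 : u q ≤ b := hqT.2
    have hq3 : x₀ < q := by
      rcases lt_or_eq_of_le hq1 with h | h
      · exact h
      · exact absurd hq2 (by rw [← h]; exact not_le.mpr hx₀)
    have hq4 : ∀ z, x₀ ≤ z → z < q → b < u z := by
      intro z hz1 hz2
      by_contra h
      push_neg at h
      exact absurd (csInf_le hTbdd ⟨hz1, h⟩) (not_le.mpr hz2)
    by_cases hleft : ∃ z, z ≤ x₀ ∧ u z ≤ b
    · -- finite left endpoint: convexity on [p, q]
      set T' : Set ℝ := {z | z ≤ x₀ ∧ u z ≤ b} with hT'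
      have hT'closed : IsClosed T' := by
        have : T' = Iic x₀ ∩ u ⁻¹' (Iic b) := by
          ext z; simp [hT', and_comm]
        rw [this]
        exact isClosed_Iic.inter (isClosed_Iic.preimage ucont)
      have hT'ne : T'.Nonempty := hleft
      have hT'bdd : BddAbove T' := ⟨x₀, fun z hz => hz.1⟩
      set p := sSup T' with hp
      have hpT : p ∈ T' := hT'closed.csSup_mem hT'ne hT'bdd
      have hp1 : p ≤ x₀ := hpT.1
      have hp2 : u p ≤ b := hpT.2
      have hp3 : p < x₀ := by
        rcases lt_or_eq_of_le hp1 with h | h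
        · exact h
        · exact absurd hp2 (by rw [h]; exact not_le.mpr hx₀)
      have hp4 : ∀ z, p < z → z ≤ x₀ → b < u z := by
        intro z hz1 hz2
        by_contra h
        push_neg at h
        exact absurd (le_csSup hT'bdd ⟨hz2, h⟩) (not_le.mpr hz1)
      have hpq : p < q := hp3.trans hq3
      have hconv : ConvexOn ℝ (Icc p q) u := by
        apply convexOn_of_deriv2_nonneg (convex_Icc p q) ucont.continuousOn
          udiff.differentiableOn u'diff.differentiableOn
        intro z hz
        rw [interior_Icc] at hz
        have : b < u z := by
          rcases le_or_gt z x₀ with h | h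
          · exact hp4 z hz.1 h
          · exact hq4 z h.le hz.2
        exact H1 z this
      have : u x₀ ≤ max (u p) (u q) := by
        apply hconv.le_on_segment (left_mem_Icc.mpr hpq.le) (right_mem_Icc.mpr hpq.le)
        rw [segment_eq_Icc hpq.le]
        exact ⟨hp3.le, hq3.le⟩
      have : u x₀ ≤ b := this.trans (max_le hp2 hq2)
      linarith
    · -- u > b on all of (-∞, q) : convexity + boundedness contradiction
      push_neg at hleft
      have hgt : ∀ z, z < q → b < u z := by
        intro z hz
        rcases le_or_gt z x₀ with h | h
        · exact hleft z h
        · exact hq4 z h.le hz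
      have hconv : ConvexOn ℝ (Iic q) u := by
        apply convexOn_of_deriv2_nonneg (convex_Iic q) ucont.continuousOn
          udiff.differentiableOn u'diff.differentiableOn
        intro z hz
        rw [interior_Iic] at hz
        exact H1 z (hgt z hz)
      -- pick x far to the left
      have hM0 : 0 ≤ M := (abs_nonneg _).trans (hM x₀)
      set D := q - x₀ with hD
      have hDpos : 0 < D := by simp [hD]; linarith
      set ε := u x₀ - b with hε
      have hεpos : 0 < ε := by simp [hε]; linarith
      set t := (2 * M + 1) * D / ε with ht
      have htpos : 0 < t := by positivity
      set x := x₀ - t with hx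
      have hxq : x ≤ q := by simp [hx]; nlinarith
      have ha : (0:ℝ) ≤ D / (D + t) := by positivity
      have hc : (0:ℝ) ≤ t / (D + t) := by positivity
      have hDt : D + t ≠ 0 := by positivity
      have hsum : D / (D + t) + t / (D + t) = 1 := by field_simp
      have hcomb : (D / (D + t)) • x + (t / (D + t)) • q = x₀ := by
        simp only [smul_eq_mul, hx, hD]
        have hDt' : q - x₀ + t ≠ 0 := hDt
        field_simp
        ring
      have hkey : u x₀ ≤ (D / (D + t)) * u x + (t / (D + t)) * u q := by
        have := hconv.2 (mem_Iic.mpr hxq) (mem_Iic.mpr le_rfl) ha hc hsum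
        rw [hcomb] at this
        simpa using this
      have hmul : (D + t) * u x₀ ≤ D * u x + t * u q := by
        have h := mul_le_mul_of_nonneg_left hkey (by positivity : (0:ℝ) ≤ D + t)
        calc (D + t) * u x₀ ≤ (D + t) * ((D / (D + t)) * u x + (t / (D + t)) * u q) := h
          _ = D * u x + t * u q := by field_simp
      have htε : t * ε = (2 * M + 1) * D := by
        rw [ht]; field_simp
      nlinarith [hM x, hM x₀, abs_le.mp (hM x), abs_le.mp (hM x₀), hq2]
  -- Step 2 : strictness
  intro x₀
  rcases lt_or_eq_of_le (hub x₀) with h | h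
  · exact h
  exfalso
  have hx₀ : u x₀ = b := h
  have hderiv0 : deriv u x₀ = 0 := by
    apply IsLocalMax.deriv_eq_zero
    apply IsMaxOn.isLocalMax (s := univ)
    · intro y _
      simp only [hx₀]
      exact hub y
    · exact univ_mem
  obtain ⟨y₀, hy₀x, hy₀⟩ := no_pos_tail hL H3 H4 x₀
  set T : Set ℝ := {y | x₀ ≤ y ∧ u y ≤ 0} with hT
  have hTclosed : IsClosed T := by
    have : T = Ici x₀ ∩ u ⁻¹' (Iic 0) := by
      ext z; simp [hT, and_comm]
    rw [this]
    exact isClosed_Ici.inter (isClosed_Iic.preimage ucont)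
  have hTne : T.Nonempty := ⟨y₀, hy₀x, hy₀⟩
  have hTbdd : BddBelow T := ⟨x₀, fun z hz => hz.1⟩
  set q := sInf T with hq
  have hqT : q ∈ T := hTclosed.csInf_mem hTne hTbdd
  have hq1 : x₀ ≤ q := hqT.1
  have hq2 : u q ≤ 0 := hqT.2
  have hq3 : x₀ < q := by
    rcases lt_or_eq_of_le hq1 with h' | h'
    · exact h'
    · exfalso; rw [← h'] at hq2; rw [hx₀] at hq2; linarith
  have hq4 : ∀ z, x₀ ≤ z → z < q → 0 < u z := by
    intro z hz1 hz2
    by_contra h'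
    push_neg at h'
    exact absurd (csInf_le hTbdd ⟨hz1, h'⟩) (not_le.mpr hz2)
  -- Gronwall : u ≡ b on [x₀, q)
  set w : ℝ → ℝ := fun z => b - u z with hw
  have hw' : ∀ z, deriv w z = -deriv u z := fun z => deriv_const_sub b
  have hww : deriv w = fun z => -deriv u z := funext hw'
  have hw'' : ∀ z, deriv (deriv w) z = -(deriv (deriv u) z) := by
    intro z
    rw [hww, deriv.fun_neg]
  have hwdiff : Differentiable ℝ w := (differentiable_const b).sub udiff
  have hw'diff : Differentiable ℝ (deriv w) := by
    rw [hww]; exact u'diff.neg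
  have huconst : ∀ z, x₀ ≤ z → z < q → u z = b := by
    intro z hz1 hz2
    set W : ℝ → ℝ × ℝ := fun s => (w s, deriv w s) with hW
    have hWcont : ContinuousOn W (Icc x₀ z) :=
      (hwdiff.continuous.prodMk hw'diff.continuous).continuousOn
    have hWd : ∀ s ∈ Ico x₀ z, HasDerivWithinAt W (deriv w s, deriv (deriv w) s) (Ici s) s := by
      intro s _
      exact ((hwdiff s).hasDerivAt.prodMk (hw'diff s).hasDerivAt).hasDerivWithinAt
    have hW0 : ‖W x₀‖ ≤ 0 := by
      have h1 : w x₀ = 0 := by simp [hw, hx₀]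
      have h2 : deriv w x₀ = 0 := by rw [hw' x₀, hderiv0, neg_zero]
      simp [hW, h1, h2, Prod.norm_def]
    have hbound : ∀ s ∈ Ico x₀ z, ‖(deriv w s, deriv (deriv w) s)‖ ≤ (K + 1) * ‖W s‖ + 0 := by
      intro s hs
      have hus : 0 < u s := hq4 s hs.1 (lt_of_lt_of_le hs.2 hz2.le)
      obtain ⟨hA, hB⟩ := H2 s hus (hub s)
      have hwge : 0 ≤ w s := by simp [hw]; exact hub s
      have h2 : 0 ≤ deriv (deriv w) s := by rw [hw'' s]; linarith
      have h3 : deriv (deriv w) s ≤ K * w s := by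
        rw [hw'' s]; simp [hw]; linarith
      have hnorm : ‖W s‖ = max |w s| |deriv w s| := by
        simp [hW, Prod.norm_def, Real.norm_eq_abs]
      rw [Prod.norm_def]
      simp only [Real.norm_eq_abs, add_zero]
      apply max_le
      · calc |deriv w s| ≤ max |w s| |deriv w s| := le_max_right _ _
          _ = ‖W s‖ := hnorm.symm
          _ ≤ (K + 1) * ‖W s‖ := by nlinarith [norm_nonneg (W s)]
      · calc |deriv (deriv w) s| = deriv (deriv w) s := abs_of_nonneg h2
          _ ≤ K * w s := h3
          _ = K * |w s| := by rw [abs_of_nonneg hwge]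
          _ ≤ K * ‖W s‖ := by
              apply mul_le_mul_of_nonneg_left _ hK
              rw [hnorm]; exact le_max_left _ _
          _ ≤ (K + 1) * ‖W s‖ := by nlinarith [norm_nonneg (W s)]
    have := norm_le_gronwallBound_of_norm_deriv_right_le hWcont hWd hW0 hbound z
      (right_mem_Icc.mpr hz1)
    rw [gronwallBound_ε0_δ0] at this
    have hWz : ‖W z‖ = 0 := le_antisymm this (norm_nonneg _)
    have : w z = 0 := by
      have h := norm_eq_zero.mp hWz
      have := congrArg Prod.fst h
      simpa [hW] using this
    simp [hw] at this
    linarith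
  -- continuity at q gives u q = b > 0, contradiction
  have huq : u q = b := by
    have h1 : Tendsto u (𝓝[<] q) (𝓝 (u q)) :=
      (ucont.continuousAt.continuousWithinAt).tendsto
    have h2 : u =ᶠ[𝓝[<] q] fun _ => b := by
      filter_upwards [Ioo_mem_nhdsLT_of_mem (⟨hq3, le_refl q⟩ : q ∈ Ioc x₀ q)] with z hz
      exact huconst z hz.1.le hz.2
    have h3 : Tendsto u (𝓝[<] q) (𝓝 b) := by
      rw [tendsto_congr' h2]
      exact tendsto_const_nhds
    exact tendsto_nhds_unique h1 h3
  linarith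

lemma admissible_bound {L a : ℝ} {f : ℝ → ℝ → ℝ} (hL : 0 < L) (hf : Admissible L f a) :
    ∃ C, 0 ≤ C ∧ ∀ u x, 0 ≤ u → u ≤ a → 0 ≤ f u x ∧ f u x ≤ C * (a - u) := by
  have hFc : ContDiff ℝ 1 (uncurry f) := hf.smooth
  set s : Set (ℝ × ℝ) := Icc 0 a ×ˢ Icc 0 L with hs
  have hscomp : IsCompact s := isCompact_Icc.prod isCompact_Icc
  have hsconv : Convex ℝ s := (convex_Icc _ _).prod (convex_Icc _ _)
  have hcont : ContinuousOn (fun p => fderiv ℝ (uncurry f) p) s :=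
    (hFc.continuous_fderiv (by norm_num)).continuousOn
  obtain ⟨C, hC⟩ := hscomp.exists_bound_of_continuousOn hcont
  refine ⟨max C 0, le_max_right _ _, ?_⟩
  intro u x hu0 hua
  constructor
  · have h := (hf.strict_anti x).antitone hua
    rw [hf.zero_root x] at h
    exact h
  · obtain ⟨y, hy0, hyL, hyx⟩ : ∃ y, 0 ≤ y ∧ y < L ∧ ∀ v, f v y = f v x := by
      refine ⟨x - ⌊x / L⌋ * L, Int.sub_floor_div_mul_nonneg x hL,
        Int.sub_floor_div_mul_lt x hL, ?_⟩
      intro v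
      have per : Function.Periodic (fun z => f v z) L := fun z => hf.periodic v z
      exact per.sub_int_mul_eq ⌊x / L⌋
    have hmem1 : ((u, y) : ℝ × ℝ) ∈ s := ⟨⟨hu0, hua⟩, ⟨hy0, hyL.le⟩⟩
    have hmem2 : ((a, y) : ℝ × ℝ) ∈ s := ⟨⟨hf.zero_pos.le, le_rfl⟩, ⟨hy0, hyL.le⟩⟩
    have hdiff : ∀ p ∈ s, DifferentiableAt ℝ (uncurry f) p := fun p _ =>
      (hFc.differentiable (by norm_num)) p
    have hbound : ∀ p ∈ s, ‖fderiv ℝ (uncurry f) p‖ ≤ max C 0 := fun p hp =>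
      (hC p hp).trans (le_max_left _ _)
    have key := hsconv.norm_image_sub_le_of_norm_fderiv_le hdiff hbound hmem2 hmem1
    have hnorm : ‖((u, y) : ℝ × ℝ) - (a, y)‖ = a - u := by
      rw [Prod.norm_def]
      simp [Real.norm_eq_abs, abs_of_nonpos (by linarith : u - a ≤ 0)]
      linarith
    rw [hnorm] at key
    have h1 : f u y - f a y ≤ max C 0 * (a - u) := by
      have := le_abs_self (uncurry f (u, y) - uncurry f (a, y))
      calc f u y - f a y = uncurry f (u, y) - uncurry f (a, y) := rfl
        _ ≤ ‖uncurry f (u, y) - uncurry f (a, y)‖ := by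
            rw [Real.norm_eq_abs]; exact le_abs_self _
        _ ≤ max C 0 * (a - u) := key
    have h2 : f a y = 0 := hf.zero_root y
    have h3 : f u y = f u x := hyx u
    linarith

/-- `L^∞` bounds for segregated stationary equilibria:
`-d a₂ < e < α a₁`. -/
theorem seg_equilibrium_linfty_bounds
    (L d α a₁ a₂ : ℝ) (hL : 0 < L) (hd : 0 < d) (hα : 0 < α)
    (f₁ f₂ : ℝ → ℝ → ℝ) (hf₁ : Admissible L f₁ a₁) (hf₂ : Admissible L f₂ a₂)
    (e : ℝ → ℝ) (he : SegEquilibrium L d α f₁ f₂ e) :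
    ∀ x : ℝ, -(d * a₂) < e x ∧ e x < α * a₁ := by
  obtain ⟨C₁, hC₁0, hC₁⟩ := admissible_bound hL hf₁
  obtain ⟨C₂, hC₂0, hC₂⟩ := admissible_bound hL hf₂
  obtain ⟨M, hM⟩ := he.bdd
  have ha₁ := hf₁.zero_pos
  have ha₂ := hf₂.zero_pos
  have hode : ∀ x, deriv (deriv e) x = -eta d α f₁ f₂ (e x) x := by
    intro x; have := he.ode x; linarith
  -- upper bound
  have hupper : ∀ x, e x < α * a₁ := by
    apply key_lemma e L (α * a₁) (C₁ * a₁) M hL (by positivity) (by positivity) he.smooth hM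
    · intro x hx
      have hex : 0 < e x := lt_trans (by positivity) hx
      have heta : eta d α f₁ f₂ (e x) x = f₁ (e x / α) x * e x := by
        simp [eta, max_eq_left hex.le, min_eq_right hex.le]
      have hfneg : f₁ (e x / α) x < 0 := by
        have h := hf₁.strict_anti x (show a₁ < e x / α by rw [lt_div_iff₀ hα]; nlinarith)
        have h' : f₁ (e x / α) x < f₁ a₁ x := h
        rw [hf₁.zero_root x] at h'
        exact h'
      rw [hode x, heta]
      nlinarith
    · intro x hx1 hx2
      have hq : 0 ≤ e x / α := by positivity
      have hq2 : e x / α ≤ a₁ := by rw [div_le_iff₀ hα]; nlinarith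
      obtain ⟨hg0, hg1⟩ := hC₁ (e x / α) x hq hq2
      have heta : eta d α f₁ f₂ (e x) x = f₁ (e x / α) x * e x := by
        simp [eta, max_eq_left hx1.le, min_eq_right hx1.le]
      constructor
      · rw [hode x, heta]
        have hnn : 0 ≤ a₁ - e x / α := by linarith
        have step : (a₁ - e x / α) * e x ≤ (a₁ - e x / α) * (α * a₁) :=
          mul_le_mul_of_nonneg_left hx2 hnn
        have heq : (a₁ - e x / α) * (α * a₁) = a₁ * (α * a₁ - e x) := by
          field_simp
        have hchain : f₁ (e x / α) x * e x ≤ C₁ * a₁ * (α * a₁ - e x) := by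
          calc f₁ (e x / α) x * e x ≤ C₁ * (a₁ - e x / α) * e x :=
                mul_le_mul_of_nonneg_right hg1 hx1.le
            _ = C₁ * ((a₁ - e x / α) * e x) := by ring
            _ ≤ C₁ * ((a₁ - e x / α) * (α * a₁)) := mul_le_mul_of_nonneg_left step hC₁0
            _ = C₁ * (a₁ * (α * a₁ - e x)) := by rw [heq]
            _ = C₁ * a₁ * (α * a₁ - e x) := by ring
        linarith
      · rw [hode x, heta]
        have := mul_nonneg hg0 hx1.le
        linarith
    · intro x
      have h := he.mono x (Nat.zero_le 1)
      simpa using h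
    · exact he.neg
  -- lower bound, for g x = -e (-x)
  have hed : Differentiable ℝ e := he.smooth.differentiable (by norm_num)
  have he'c : ContDiff ℝ 1 (deriv e) :=
    ((contDiff_succ_iff_deriv (n := 1)).mp (by exact_mod_cast he.smooth)).2.2
  have he'd : Differentiable ℝ (deriv e) := he'c.differentiable (by norm_num)
  set g : ℝ → ℝ := fun x => -e (-x) with hg
  have hgs : ContDiff ℝ 2 g := (he.smooth.comp contDiff_neg).neg
  have hg1 : ∀ x, HasDerivAt g (deriv e (-x)) x := by
    intro x
    have h1 : HasDerivAt (fun y : ℝ => -y) (-1) x := hasDerivAt_neg x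
    have h2 : HasDerivAt e (deriv e (-x)) (-x) := (hed (-x)).hasDerivAt
    have h3 := h2.comp x h1
    have h4 := h3.neg
    simpa [hg, Function.comp_def, Pi.neg_def] using h4
  have hg1' : deriv g = fun x => deriv e (-x) := funext fun x => (hg1 x).deriv
  have hg2 : ∀ x, deriv (deriv g) x = eta d α f₁ f₂ (e (-x)) (-x) := by
    intro x
    rw [hg1']
    have h1 : HasDerivAt (fun y : ℝ => -y) (-1) x := hasDerivAt_neg x
    have h2 : HasDerivAt (deriv e) (deriv (deriv e) (-x)) (-x) := (he'd (-x)).hasDerivAt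
    have h3 := (h2.comp x h1).deriv
    have h4 : deriv (fun y => deriv e (-y)) x = deriv (deriv e) (-x) * (-1) := by
      simpa [Function.comp_def] using h3
    rw [h4, hode (-x)]
    ring
  have hMg : ∀ x, |g x| ≤ M := by
    intro x
    simp only [hg, abs_neg]
    exact hM (-x)
  have hlow : ∀ x, g x < d * a₂ := by
    apply key_lemma g L (d * a₂) (C₂ * a₂ / d) M hL (by positivity) (by positivity) hgs hMg
    · intro x hx
      have hgx : 0 < g x := lt_trans (by positivity) hx
      have hv : e (-x) < 0 := by
        have : g x = -e (-x) := rfl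
        linarith
      have heta : eta d α f₁ f₂ (e (-x)) (-x) =
          -(1 / d * f₂ (-e (-x) / d) (-x) * -e (-x)) := by
        simp only [eta, max_eq_right hv.le, min_eq_left hv.le, mul_zero, zero_sub]
      have hfneg : f₂ (-e (-x) / d) (-x) < 0 := by
        have h := hf₂.strict_anti (-x) (show a₂ < -e (-x) / d by
          rw [lt_div_iff₀ hd]
          have : g x = -e (-x) := rfl
          nlinarith)
        have h' : f₂ (-e (-x) / d) (-x) < f₂ a₂ (-x) := h
        rw [hf₂.zero_root (-x)] at h'
        exact h'
      rw [hg2 x, heta]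
      have hd' : 0 < 1 / d := by positivity
      have hnn : (0:ℝ) ≤ 1 / d * -f₂ (-e (-x) / d) (-x) * -e (-x) :=
        mul_nonneg (mul_nonneg hd'.le (by linarith)) (by linarith)
      nlinarith [hnn]
    · intro x hx1 hx2
      have hv : e (-x) < 0 := by
        have : g x = -e (-x) := rfl
        linarith
      have hvge : -(d * a₂) ≤ e (-x) := by
        have : g x = -e (-x) := rfl
        linarith
      have hq : 0 ≤ -e (-x) / d := by positivity
      have hq2 : -e (-x) / d ≤ a₂ := by rw [div_le_iff₀ hd]; nlinarith
      obtain ⟨hg0, hgb⟩ := hC₂ (-e (-x) / d) (-x) hq hq2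
      have heta : eta d α f₁ f₂ (e (-x)) (-x) =
          -(1 / d * f₂ (-e (-x) / d) (-x) * -e (-x)) := by
        simp only [eta, max_eq_right hv.le, min_eq_left hv.le, mul_zero, zero_sub]
      have hgeq : g x = -e (-x) := rfl
      constructor
      · rw [hg2 x, heta]
        have hF := hgb
        have hstep1 : 1 / d * f₂ (-e (-x) / d) (-x) * -e (-x) ≤
            1 / d * (C₂ * (a₂ - -e (-x) / d)) * -e (-x) := by
          apply mul_le_mul_of_nonneg_right _ (by linarith)
          apply mul_le_mul_of_nonneg_left hF (by positivity)
        have hnn : 0 ≤ a₂ - -e (-x) / d := by linarith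
        have hstep2 : 1 / d * (C₂ * (a₂ - -e (-x) / d)) * -e (-x) ≤
            1 / d * (C₂ * (a₂ - -e (-x) / d)) * (d * a₂) := by
          apply mul_le_mul_of_nonneg_left _ (by positivity)
          linarith
        have hstep3 : 1 / d * (C₂ * (a₂ - -e (-x) / d)) * (d * a₂) =
            C₂ * a₂ / d * (d * a₂ - g x) := by
          rw [hgeq]
          field_simp
        linarith
      · rw [hg2 x, heta]
        have h1 : 0 ≤ 1 / d * f₂ (-e (-x) / d) (-x) * -e (-x) := by
          apply mul_nonneg (mul_nonneg (by positivity) hg0) (by linarith)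
        linarith
    · intro x
      have h2 := he.mono (-x - L) (Nat.zero_le 1)
      simp only [Nat.cast_one, one_mul, Nat.cast_zero, zero_mul, add_zero] at h2
      have h0 : -x - L + L = -x := by ring
      rw [h0] at h2
      show -e (-(x + L)) ≤ -e (-x)
      have h5 : -(x + L) = -x - L := by ring
      rw [h5]
      linarith
    · obtain ⟨x, hx⟩ := he.pos
      refine ⟨-x, ?_⟩
      show -e (-(-x)) < 0
      rw [neg_neg]
      linarith
  intro x
  refine ⟨?_, hupper x⟩
  have h := hlow (-x)
  have : g (-x) = -e x := by rw [hg]; simp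
  rw [this] at h
  linarith
end
end

section
/- Fix a period L > 0, parameters d, α > 0 and admissible nonlinearities f₁, f₂ with zeros a₁, a₂. Let e be a segregated stationary equilibrium and let 𝒵 = e⁻¹({0}). Then: (i) 𝒵 is a discrete set (every point of 𝒵 is isolated in ℝ); (ii) if 𝒵 is finite, then its cardinality is odd; (iii) 𝒵 admits either a minimum or a maximum. -/
open MeasureTheory Set Filter Topology Function

noncomputable section

section AuxSegEq

lemma gronKey (u : ℝ → ℝ) (hu1 : Differentiable ℝ u) (hu2 : Differentiable ℝ (deriv u))
    (C : ℝ) (hC : 0 ≤ C) (hb : ∀ x, |deriv (deriv u) x| ≤ C * |u x|)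
    (x₀ : ℝ) (h0 : u x₀ = 0) (h0' : deriv u x₀ = 0) :
    ∀ x, x₀ ≤ x → u x = 0 := by
  intro b hbx
  set h : ℝ → ℝ := fun x => u x ^ 2 + deriv u x ^ 2 with hh
  have hder : ∀ x, HasDerivAt h
      (2 * u x * deriv u x + 2 * deriv u x * deriv (deriv u) x) x := by
    intro x
    have h1 := ((hu1 x).hasDerivAt.pow 2)
    have h2 := ((hu2 x).hasDerivAt.pow 2)
    have := h1.add h2
    exact this.congr_deriv (by push_cast; ring)
  have hcont : ContinuousOn h (Icc x₀ b) :=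
    ((hu1.continuous.pow 2).add ((hu2.continuous.pow 2))).continuousOn
  have hbound : ∀ x ∈ Ico x₀ b,
      ‖2 * u x * deriv u x + 2 * deriv u x * deriv (deriv u) x‖ ≤ (1 + C) * ‖h x‖ + 0 := by
    intro x _
    have hnn : (0:ℝ) ≤ h x := by positivity
    have e1 : |2 * u x * deriv u x| ≤ u x ^ 2 + deriv u x ^ 2 :=
      abs_le.mpr ⟨by nlinarith [sq_nonneg (u x + deriv u x)],
        by nlinarith [sq_nonneg (u x - deriv u x)]⟩
    have e2 : |2 * deriv u x * deriv (deriv u) x| ≤ C * (u x ^ 2 + deriv u x ^ 2) := by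
      have h1 := hb x
      have habs : |2 * deriv u x * deriv (deriv u) x|
          = 2 * |deriv u x| * |deriv (deriv u) x| := by
        rw [abs_mul, abs_mul, abs_two]
      rw [habs]
      calc 2 * |deriv u x| * |deriv (deriv u) x| ≤ 2 * |deriv u x| * (C * |u x|) := by
            apply mul_le_mul_of_nonneg_left h1 (by positivity)
        _ ≤ C * (u x ^ 2 + deriv u x ^ 2) := by
            nlinarith [sq_nonneg (|u x| - |deriv u x|), sq_abs (u x), sq_abs (deriv u x),
              abs_nonneg (u x), abs_nonneg (deriv u x)]
    have h3 : ‖2 * u x * deriv u x + 2 * deriv u x * deriv (deriv u) x‖ ≤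
        (u x ^ 2 + deriv u x ^ 2) + C * (u x ^ 2 + deriv u x ^ 2) :=
      le_trans (norm_add_le _ _) (add_le_add e1 e2)
    rw [Real.norm_eq_abs] at h3
    rw [Real.norm_eq_abs, Real.norm_eq_abs, abs_of_nonneg hnn]
    simp only [hh] at *
    linarith
  have := norm_le_gronwallBound_of_norm_deriv_right_le (f := h)
    (f' := fun x => 2 * u x * deriv u x + 2 * deriv u x * deriv (deriv u) x)
    (δ := 0) (K := 1 + C) (ε := 0) hcont
    (fun x _ => (hder x).hasDerivWithinAt) (by simp [hh, h0, h0']) hbound b ⟨hbx, le_refl b⟩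
  rw [gronwallBound_ε0_δ0] at this
  have hb0 : h b = 0 := le_antisymm
    (by simpa [Real.norm_eq_abs, abs_of_nonneg (by positivity : (0:ℝ) ≤ h b)] using this)
    (by positivity)
  simp only [hh] at hb0
  nlinarith [sq_nonneg (u b), sq_nonneg (deriv u b)]

lemma slope_tendsto_left (u : ℝ → ℝ) (hu : Differentiable ℝ u) (x₀ : ℝ) :
    Tendsto (slope u x₀) (𝓝[<] x₀) (𝓝 (deriv u x₀)) :=
  (hasDerivAt_iff_tendsto_slope.mp (hu x₀).hasDerivAt).mono_left
    (nhdsWithin_mono _ (fun _ hy => ne_of_lt hy))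

lemma slope_tendsto_right (u : ℝ → ℝ) (hu : Differentiable ℝ u) (x₀ : ℝ) :
    Tendsto (slope u x₀) (𝓝[>] x₀) (𝓝 (deriv u x₀)) :=
  (hasDerivAt_iff_tendsto_slope.mp (hu x₀).hasDerivAt).mono_left
    (nhdsWithin_mono _ (fun _ hy => ne_of_gt hy))

lemma deriv_nonpos_of_pos_left (u : ℝ → ℝ) (hu : Differentiable ℝ u) (x₀ w : ℝ)
    (hw : w < x₀) (h0 : u x₀ = 0) (hpos : ∀ y, w < y → y < x₀ → 0 < u y) :
    deriv u x₀ ≤ 0 := by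
  apply le_of_tendsto (slope_tendsto_left u hu x₀)
  filter_upwards [Ioo_mem_nhdsLT_of_mem ⟨hw, le_refl x₀⟩] with y hy
  have hs : slope u x₀ y = u y / (y - x₀) := by simp [slope_def_field, h0]
  rw [hs]
  exact le_of_lt (div_neg_of_pos_of_neg (hpos y hy.1 hy.2) (by linarith [hy.2]))

lemma deriv_nonpos_of_neg_right (u : ℝ → ℝ) (hu : Differentiable ℝ u) (x₀ w : ℝ)
    (hw : x₀ < w) (h0 : u x₀ = 0) (hneg : ∀ y, x₀ < y → y < w → u y < 0) :
    deriv u x₀ ≤ 0 := by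
  apply le_of_tendsto (slope_tendsto_right u hu x₀)
  filter_upwards [Ioo_mem_nhdsGT_of_mem ⟨le_refl x₀, hw⟩] with y hy
  have hs : slope u x₀ y = u y / (y - x₀) := by simp [slope_def_field, h0]
  rw [hs]
  exact le_of_lt (div_neg_of_neg_of_pos (hneg y hy.1 hy.2) (by linarith [hy.1]))

lemma deriv_nonneg_of_neg_left (u : ℝ → ℝ) (hu : Differentiable ℝ u) (x₀ w : ℝ)
    (hw : w < x₀) (h0 : u x₀ = 0) (hneg : ∀ y, w < y → y < x₀ → u y < 0) :
    0 ≤ deriv u x₀ := by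
  have := deriv_nonpos_of_pos_left (fun x => -u x) (hu.neg) x₀ w hw (by simp [h0])
    (fun y h1 h2 => by simpa using (hneg y h1 h2))
  have hd : deriv (fun x => -u x) x₀ = -deriv u x₀ := deriv.neg
  rw [hd] at this
  linarith [this]

lemma neg_right_of_deriv_neg (u : ℝ → ℝ) (hu : Differentiable ℝ u) (x₀ : ℝ)
    (h0 : u x₀ = 0) (hd : deriv u x₀ < 0) :
    ∃ δ > 0, ∀ y, x₀ < y → y < x₀ + δ → u y < 0 := by
  have hev : ∀ᶠ y in 𝓝[>] x₀, slope u x₀ y < 0 :=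
    (slope_tendsto_right u hu x₀) (Iio_mem_nhds hd)
  rw [eventually_iff, mem_nhdsGT_iff_exists_Ioo_subset] at hev
  obtain ⟨w, hw, hsub⟩ := hev
  refine ⟨w - x₀, by simp only [mem_Ioi] at hw; linarith, fun y h1 h2 => ?_⟩
  have hy : y ∈ Ioo x₀ w := ⟨h1, by linarith⟩
  have := hsub hy
  simp only [mem_setOf_eq, slope_def_field, h0, sub_zero] at this
  by_contra hc
  push_neg at hc
  exact absurd this (not_lt.mpr (div_nonneg hc (by linarith)))

lemma pos_right_of_deriv_pos (u : ℝ → ℝ) (hu : Differentiable ℝ u) (x₀ : ℝ)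
    (h0 : u x₀ = 0) (hd : 0 < deriv u x₀) :
    ∃ δ > 0, ∀ y, x₀ < y → y < x₀ + δ → 0 < u y := by
  have := neg_right_of_deriv_neg (fun x => -u x) hu.neg x₀ (by simp [h0])
    (by rw [deriv.fun_neg]; linarith)
  obtain ⟨δ, hδ, hs⟩ := this
  exact ⟨δ, hδ, fun y h1 h2 => by have := hs y h1 h2; simpa using this⟩

lemma isolated_zero (u : ℝ → ℝ) (hu : Differentiable ℝ u) (x₀ : ℝ)
    (h0 : u x₀ = 0) (hd : deriv u x₀ ≠ 0) :
    ∃ ε > 0, ∀ y, u y = 0 → |y - x₀| < ε → y = x₀ := by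
  have ht := hasDerivAt_iff_tendsto_slope.mp (hu x₀).hasDerivAt
  have hev : ∀ᶠ y in 𝓝[≠] x₀, slope u x₀ y ≠ 0 :=
    ht (isOpen_compl_singleton.mem_nhds (by simpa using hd))
  rw [eventually_nhdsWithin_iff, Metric.eventually_nhds_iff] at hev
  obtain ⟨ε, hε, H⟩ := hev
  refine ⟨ε, hε, fun y hy hlt => ?_⟩
  by_contra hne
  have := H (show dist y x₀ < ε by rwa [Real.dist_eq]) (by simpa using hne)
  exact this (by simp [slope_def_field, h0, hy])

lemma per_bound (L : ℝ) (hL : 0 < L) (f : ℝ → ℝ → ℝ) (hc : Continuous (uncurry f))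
    (hp : ∀ u x, f u (x + L) = f u x) (R : ℝ) :
    ∃ B, 0 ≤ B ∧ ∀ u x, |u| ≤ R → |f u x| ≤ B := by
  obtain ⟨B, hB⟩ := ((isCompact_Icc (a := -R) (b := R)).prod
    (isCompact_Icc (a := (0:ℝ)) (b := L))).exists_bound_of_continuousOn hc.continuousOn
  refine ⟨max B 0, le_max_right _ _, fun u x hu => ?_⟩
  have per : Function.Periodic (fun y => f u y) L := fun y => hp u y
  set y := L * Int.fract (x / L) with hy
  have hxy : f u x = f u y := by
    have h1 : y = x - (⌊x / L⌋ : ℝ) * L := by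
      rw [hy, Int.fract]
      field_simp
    rw [h1]
    exact (per.sub_int_mul_eq ⌊x / L⌋).symm
  have hy0 : 0 ≤ y := mul_nonneg hL.le (Int.fract_nonneg _)
  have hy1 : y ≤ L := by
    have := Int.fract_lt_one (x / L)
    nlinarith
  have := hB (u, y) ⟨⟨by linarith [abs_le.mp hu], (abs_le.mp hu).2⟩, hy0, hy1⟩
  rw [hxy]
  calc |f u y| ≤ B := by simpa [Function.uncurry, Real.norm_eq_abs] using this
    _ ≤ max B 0 := le_max_left _ _

end AuxSegEq

/-- the zero set of a segregated stationary equilibrium is discrete,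
has odd cardinality when finite, and admits a minimum or a maximum. -/
theorem seg_equilibrium_zero_set
    (L d α a₁ a₂ : ℝ) (hL : 0 < L) (hd : 0 < d) (hα : 0 < α)
    (f₁ f₂ : ℝ → ℝ → ℝ) (hf₁ : Admissible L f₁ a₁) (hf₂ : Admissible L f₂ a₂)
    (e : ℝ → ℝ) (he : SegEquilibrium L d α f₁ f₂ e) :
    (∀ x ∈ {y : ℝ | e y = 0}, ∃ ε > 0, ∀ y ∈ {y : ℝ | e y = 0},
      |y - x| < ε → y = x) ∧
    (∀ hfin : Set.Finite {y : ℝ | e y = 0}, Odd hfin.toFinset.card) ∧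
    ((∃ m, IsLeast {y : ℝ | e y = 0} m) ∨ (∃ m, IsGreatest {y : ℝ | e y = 0} m)) := by
    classical
  have econt : Continuous e := he.smooth.continuous
  have h2 : ContDiff ℝ (1 + 1) e := by
    have := he.smooth
    norm_num at this ⊢
    exact this
  have hde : Differentiable ℝ e := (contDiff_succ_iff_deriv.mp h2).1
  have hdd : Differentiable ℝ (deriv e) :=
    (contDiff_one_iff_deriv.mp (contDiff_succ_iff_deriv.mp h2).2.2).1
  obtain ⟨M, hM⟩ := he.bdd
  obtain ⟨B₁, hB₁0, hB₁⟩ := per_bound L hL f₁ hf₁.smooth.continuous hf₁.periodic (M / α)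
  obtain ⟨B₂, hB₂0, hB₂⟩ := per_bound L hL f₂ hf₂.smooth.continuous hf₂.periodic (M / d)
  set C : ℝ := B₁ + (1 / d) * B₂ with hCdef
  have hC0 : 0 ≤ C := by positivity
  have hCb : ∀ x, |deriv (deriv e) x| ≤ C * |e x| := by
    intro x
    have hode := he.ode x
    have hdd2 : deriv (deriv e) x = -(eta d α f₁ f₂ (e x) x) := by linarith [hode]
    rw [hdd2, abs_neg]
    have hz := hM x
    have hb1 : |f₁ (e x / α) x| ≤ B₁ := by
      apply hB₁
      rw [abs_div, abs_of_pos hα]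
      gcongr
    have hb2 : |f₂ (-(e x) / d) x| ≤ B₂ := by
      apply hB₂
      rw [abs_div, abs_of_pos hd, abs_neg]
      gcongr
    have hmax : |max (e x) 0| ≤ |e x| := by
      rcases le_total (e x) 0 with h | h
      · rw [max_eq_right h]; simp [abs_nonneg]
      · rw [max_eq_left h]
    have hmin : |(-(min (e x) 0))| ≤ |e x| := by
      rw [abs_neg]
      rcases le_total (e x) 0 with h | h
      · rw [min_eq_left h]
      · rw [min_eq_right h]; simp [abs_nonneg]
    have step : |eta d α f₁ f₂ (e x) x| ≤ B₁ * |e x| + 1 / d * (B₂ * |e x|) := by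
      rw [eta, sub_eq_add_neg]
      refine le_trans (abs_add_le _ _) ?_
      gcongr ?_ + ?_
      · rw [abs_mul]
        exact mul_le_mul hb1 hmax (abs_nonneg _) hB₁0
      · rw [abs_neg, abs_mul, abs_mul, abs_of_pos (by positivity : (0:ℝ) < 1 / d), mul_assoc]
        refine mul_le_mul_of_nonneg_left ?_ (by positivity)
        exact mul_le_mul hb2 hmin (abs_nonneg _) hB₂0
    calc |eta d α f₁ f₂ (e x) x| ≤ B₁ * |e x| + 1 / d * (B₂ * |e x|) := step
      _ = C * |e x| := by rw [hCdef]; ring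
  have key : ∀ x₀, e x₀ = 0 → deriv e x₀ ≠ 0 := by
    intro x₀ h0 h0'
    obtain ⟨p, hp⟩ := he.pos
    have hzero : ∀ y, e y = 0 := by
      intro y
      rcases le_total x₀ y with h | h
      · exact gronKey e hde hdd C hC0 hCb x₀ h0 h0' y h
      · set r : ℝ → ℝ := fun z => e (2 * x₀ - z) with hr
        have hinner : ∀ z : ℝ, HasDerivAt (fun w : ℝ => 2 * x₀ - w) (-1) z := by
          intro z
          simpa using ((hasDerivAt_id z).const_sub (2 * x₀))
        have hr1 : ∀ z, HasDerivAt r (-(deriv e (2 * x₀ - z))) z := by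
          intro z
          have := (hde (2 * x₀ - z)).hasDerivAt.comp z (hinner z)
          simpa [hr, Function.comp_def] using this
        have hrd : deriv r = fun z => -(deriv e (2 * x₀ - z)) := funext fun z => (hr1 z).deriv
        have hr2 : ∀ z, HasDerivAt (fun w => -(deriv e (2 * x₀ - w)))
            (deriv (deriv e) (2 * x₀ - z)) z := by
          intro z
          have := ((hdd (2 * x₀ - z)).hasDerivAt.comp z (hinner z)).neg
          exact this.congr_deriv (by ring)
        have hrdd : ∀ z, deriv (deriv r) z = deriv (deriv e) (2 * x₀ - z) := by
          intro z; rw [hrd]; exact (hr2 z).deriv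
        have hrdiff : Differentiable ℝ r := fun z => (hr1 z).differentiableAt
        have hrdiff2 : Differentiable ℝ (deriv r) := by
          rw [hrd]; exact fun z => (hr2 z).differentiableAt
        have hrb : ∀ z, |deriv (deriv r) z| ≤ C * |r z| := by
          intro z; rw [hrdd z]; exact hCb (2 * x₀ - z)
        have hr0 : r x₀ = 0 := by
          show e (2 * x₀ - x₀) = 0
          rw [show 2 * x₀ - x₀ = x₀ by ring]; exact h0
        have hr0' : deriv r x₀ = 0 := by
          rw [hrd]
          show -(deriv e (2 * x₀ - x₀)) = 0
          rw [show 2 * x₀ - x₀ = x₀ by ring, h0', neg_zero]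
        have := gronKey r hrdiff hrdiff2 C hC0 hrb x₀ hr0 hr0' (2 * x₀ - y) (by linarith)
        have heq : (2:ℝ) * x₀ - (2 * x₀ - y) = y := by ring
        simp only [hr] at this
        rwa [heq] at this
    exact (ne_of_gt hp) (hzero p)
  have ivt : ∀ s t : ℝ, 0 < e s → e t < 0 → ∃ z ∈ uIcc s t, e z = 0 := by
    intro s t hs ht
    have h0m : (0:ℝ) ∈ uIcc (e s) (e t) := by
      rw [Set.mem_uIcc]; right; exact ⟨ht.le, hs.le⟩
    obtain ⟨z, hz, hz0⟩ := intermediate_value_uIcc econt.continuousOn h0m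
    exact ⟨z, hz, hz0⟩
  have hZclosed : IsClosed {y : ℝ | e y = 0} := isClosed_eq econt continuous_const
  have hZne : {y : ℝ | e y = 0}.Nonempty := by
    obtain ⟨p, hp⟩ := he.pos
    obtain ⟨q, hq⟩ := he.neg
    obtain ⟨z, _, hz0⟩ := ivt p q hp hq
    exact ⟨z, hz0⟩
  refine ⟨?_, ?_, ?_⟩
  · -- (i) discreteness
    intro x₀ hx₀
    simp only [mem_setOf_eq] at hx₀
    obtain ⟨ε, hε, H⟩ := isolated_zero e hde x₀ hx₀ (key x₀ hx₀)
    exact ⟨ε, hε, fun y hy hlt => H y hy hlt⟩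
  · -- (ii) odd cardinality
    intro hfin
    set n := hfin.toFinset.card with hn
    have hnpos : 0 < n := by
      rw [hn, Finset.card_pos]
      obtain ⟨z, hz⟩ := hZne
      exact ⟨z, hfin.mem_toFinset.mpr hz⟩
    set o := hfin.toFinset.orderIsoOfFin hn.symm with ho
    set x : Fin n → ℝ := fun i => (o i : ℝ) with hx
    have hxZ : ∀ i, e (x i) = 0 := by
      intro i
      have := (o i).2
      rw [Set.Finite.mem_toFinset] at this
      exact this
    have hmono : StrictMono x := fun i j hij => Subtype.coe_lt_coe.mpr (o.strictMono hij)
    have hsurj : ∀ y, e y = 0 → ∃ i, x i = y := by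
      intro y hy
      refine ⟨o.symm ⟨y, hfin.mem_toFinset.mpr hy⟩, ?_⟩
      simp only [hx, OrderIso.apply_symm_apply]
    have hx0le : ∀ y, e y = 0 → x ⟨0, hnpos⟩ ≤ y := by
      intro y hy
      obtain ⟨i, rfl⟩ := hsurj y hy
      exact hmono.monotone (by simp [Fin.le_def])
    have hlastlt : n - 1 < n := Nat.sub_lt hnpos one_pos
    have hlastge : ∀ y, e y = 0 → y ≤ x ⟨n - 1, hlastlt⟩ := by
      intro y hy
      obtain ⟨i, rfl⟩ := hsurj y hy
      exact hmono.monotone (by rw [Fin.le_def]; exact Nat.le_pred_of_lt i.2)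
    have hfarpos : ∀ w : ℝ, ∃ v, v < w ∧ 0 < e v := by
      intro w
      obtain ⟨p, hp⟩ := he.pos
      obtain ⟨k, hk⟩ := exists_nat_gt ((p - w) / L)
      refine ⟨p - k * L, ?_, ?_⟩
      · rw [div_lt_iff₀ hL] at hk; linarith
      · have hmm := (he.mono (p - k * L)) (Nat.zero_le k)
        simp only [Nat.cast_zero, zero_mul, add_zero] at hmm
        rw [show p - (k:ℝ) * L + (k:ℝ) * L = p by ring] at hmm
        linarith
    have hfarneg : ∀ w : ℝ, ∃ v, w < v ∧ e v < 0 := by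
      intro w
      obtain ⟨q, hq⟩ := he.neg
      obtain ⟨k, hk⟩ := exists_nat_gt ((w - q) / L)
      refine ⟨q + k * L, ?_, ?_⟩
      · rw [div_lt_iff₀ hL] at hk; linarith
      · have hmm := (he.mono q) (Nat.zero_le k)
        simp only [Nat.cast_zero, zero_mul, add_zero] at hmm
        linarith
    have hL0 : ∀ y, y < x ⟨0, hnpos⟩ → 0 < e y := by
      intro y hy
      rcases lt_trichotomy (e y) 0 with h | h | h
      · exfalso
        obtain ⟨v, hv, hvpos⟩ := hfarpos y
        obtain ⟨z, hz, hz0⟩ := ivt v y hvpos h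
        rw [Set.mem_uIcc] at hz
        have hzlt : z < x ⟨0, hnpos⟩ := by
          rcases hz with ⟨a1, a2⟩ | ⟨a1, a2⟩ <;> linarith
        exact absurd (hx0le z hz0) (not_le.mpr hzlt)
      · exact absurd (hx0le y h) (not_le.mpr hy)
      · exact h
    have hR0 : ∀ y, x ⟨n - 1, hlastlt⟩ < y → e y < 0 := by
      intro y hy
      rcases lt_trichotomy (e y) 0 with h | h | h
      · exact h
      · exact absurd (hlastge y h) (not_le.mpr hy)
      · exfalso
        obtain ⟨v, hv, hvneg⟩ := hfarneg y
        obtain ⟨z, hz, hz0⟩ := ivt y v h hvneg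
        rw [Set.mem_uIcc] at hz
        have hzgt : x ⟨n - 1, hlastlt⟩ < z := by
          rcases hz with ⟨a1, a2⟩ | ⟨a1, a2⟩ <;> linarith
        exact absurd (hlastge z hz0) (not_le.mpr hzgt)
    have hgap : ∀ (i : ℕ) (hi1 : i < n) (hi2 : i + 1 < n), ∀ y,
        x ⟨i, hi1⟩ < y → y < x ⟨i + 1, hi2⟩ → e y ≠ 0 := by
      intro i hi1 hi2 y h1 h2 hy
      obtain ⟨j, rfl⟩ := hsurj y hy
      rcases le_or_gt j ⟨i, hi1⟩ with h | h
      · exact absurd (hmono.monotone h) (not_le.mpr h1)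
      · have hle : (⟨i + 1, hi2⟩ : Fin n) ≤ j := by
          rw [Fin.le_def]
          exact Nat.succ_le_of_lt (Fin.lt_def.mp h)
        exact absurd (hmono.monotone hle) (not_le.mpr h2)
    have main : ∀ i : ℕ, ∀ hi : i < n,
        (Even i → deriv e (x ⟨i, hi⟩) < 0) ∧ (¬ Even i → 0 < deriv e (x ⟨i, hi⟩)) := by
      intro i
      induction i with
      | zero =>
        intro hi
        refine ⟨fun _ => ?_, fun hodd => absurd Even.zero hodd⟩
        have hle : deriv e (x ⟨0, hi⟩) ≤ 0 :=
          deriv_nonpos_of_pos_left e hde (x ⟨0, hi⟩) (x ⟨0, hi⟩ - 1) (by linarith) (hxZ _)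
            (fun y _ h2' => hL0 y h2')
        exact lt_of_le_of_ne hle (key _ (hxZ _))
      | succ i ih =>
        intro hi
        have hi' : i < n := Nat.lt_of_succ_lt hi
        have hlt : x ⟨i, hi'⟩ < x ⟨i + 1, hi⟩ :=
          hmono (by rw [Fin.lt_def]; exact Nat.lt_succ_self i)
        rcases Nat.even_or_odd i with hev | hodd
        · have hdi := (ih hi').1 hev
          obtain ⟨δ, hδ, hneg⟩ := neg_right_of_deriv_neg e hde _ (hxZ ⟨i, hi'⟩) hdi
          set w := x ⟨i, hi'⟩ + min δ (x ⟨i + 1, hi⟩ - x ⟨i, hi'⟩) / 2 with hw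
          have hmin0 : 0 < min δ (x ⟨i + 1, hi⟩ - x ⟨i, hi'⟩) := lt_min hδ (by linarith)
          have hw1 : x ⟨i, hi'⟩ < w := by rw [hw]; linarith
          have hw2 : w < x ⟨i, hi'⟩ + δ := by
            rw [hw]
            have := min_le_left δ (x ⟨i + 1, hi⟩ - x ⟨i, hi'⟩)
            linarith
          have hw3 : w < x ⟨i + 1, hi⟩ := by
            rw [hw]
            have := min_le_right δ (x ⟨i + 1, hi⟩ - x ⟨i, hi'⟩)
            linarith
          have hwneg : e w < 0 := hneg w hw1 hw2
          have hallneg : ∀ y, x ⟨i, hi'⟩ < y → y < x ⟨i + 1, hi⟩ → e y < 0 := by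
            intro y h1 h2
            rcases lt_trichotomy (e y) 0 with h | h | h
            · exact h
            · exact absurd h (hgap i hi' hi y h1 h2)
            · exfalso
              obtain ⟨z, hz, hz0⟩ := ivt y w h hwneg
              rw [Set.mem_uIcc] at hz
              refine hgap i hi' hi z ?_ ?_ hz0
              · rcases hz with ⟨a1, a2⟩ | ⟨a1, a2⟩ <;> linarith
              · rcases hz with ⟨a1, a2⟩ | ⟨a1, a2⟩ <;> linarith
          have hge : 0 ≤ deriv e (x ⟨i + 1, hi⟩) :=
            deriv_nonneg_of_neg_left e hde _ (x ⟨i, hi'⟩) hlt (hxZ _) hallneg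
          exact ⟨fun hc => absurd hev (Nat.even_add_one.mp hc),
            fun _ => lt_of_le_of_ne hge (Ne.symm (key _ (hxZ _)))⟩
        · have hdi := (ih hi').2 (Nat.not_even_iff_odd.mpr hodd)
          obtain ⟨δ, hδ, hposr⟩ := pos_right_of_deriv_pos e hde _ (hxZ ⟨i, hi'⟩) hdi
          set w := x ⟨i, hi'⟩ + min δ (x ⟨i + 1, hi⟩ - x ⟨i, hi'⟩) / 2 with hw
          have hmin0 : 0 < min δ (x ⟨i + 1, hi⟩ - x ⟨i, hi'⟩) := lt_min hδ (by linarith)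
          have hw1 : x ⟨i, hi'⟩ < w := by rw [hw]; linarith
          have hw2 : w < x ⟨i, hi'⟩ + δ := by
            rw [hw]
            have := min_le_left δ (x ⟨i + 1, hi⟩ - x ⟨i, hi'⟩)
            linarith
          have hw3 : w < x ⟨i + 1, hi⟩ := by
            rw [hw]
            have := min_le_right δ (x ⟨i + 1, hi⟩ - x ⟨i, hi'⟩)
            linarith
          have hwpos : 0 < e w := hposr w hw1 hw2
          have hallpos : ∀ y, x ⟨i, hi'⟩ < y → y < x ⟨i + 1, hi⟩ → 0 < e y := by
            intro y h1 h2
            rcases lt_trichotomy (e y) 0 with h | h | h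
            · exfalso
              obtain ⟨z, hz, hz0⟩ := ivt w y hwpos h
              rw [Set.mem_uIcc] at hz
              refine hgap i hi' hi z ?_ ?_ hz0
              · rcases hz with ⟨a1, a2⟩ | ⟨a1, a2⟩ <;> linarith
              · rcases hz with ⟨a1, a2⟩ | ⟨a1, a2⟩ <;> linarith
            · exact absurd h (hgap i hi' hi y h1 h2)
            · exact h
          have hle : deriv e (x ⟨i + 1, hi⟩) ≤ 0 :=
            deriv_nonpos_of_pos_left e hde _ (x ⟨i, hi'⟩) hlt (hxZ _) hallpos
          exact ⟨fun _ => lt_of_le_of_ne hle (key _ (hxZ _)),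
            fun hc => absurd (Nat.even_add_one.mpr (Nat.not_even_iff_odd.mpr hodd)) hc⟩
    have hle : deriv e (x ⟨n - 1, hlastlt⟩) ≤ 0 :=
      deriv_nonpos_of_neg_right e hde _ (x ⟨n - 1, hlastlt⟩ + 1) (by linarith) (hxZ _)
        (fun y h1 _ => hR0 y h1)
    have heven : Even (n - 1) := by
      by_contra hodd
      have := (main (n - 1) hlastlt).2 hodd
      linarith
    rw [show n = (n - 1) + 1 from (Nat.succ_pred_eq_of_pos hnpos).symm]
    exact Even.add_one heven
  · -- (iii) min or max
    rcases he.tail with hbb | hba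
    · obtain ⟨b, hb⟩ := hbb
      have hsub : {y : ℝ | e y = 0} ⊆ Ici b := by
        intro x₀ hx₀
        by_contra hlt
        rw [mem_Ici, not_le] at hlt
        have hmin : ∀ᶠ y in 𝓝 x₀, e x₀ ≤ e y := by
          filter_upwards [Iio_mem_nhds hlt] with y hy
          have h1 : ¬ e y < 0 := fun hc => absurd (hb hc) (not_le.mpr hy)
          have h2 : e x₀ = 0 := hx₀
          linarith [not_lt.mp h1]
        exact key x₀ hx₀ (IsLocalMin.deriv_eq_zero hmin)
      left
      exact ⟨sInf _, hZclosed.csInf_mem hZne ⟨b, fun y hy => hsub hy⟩,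
        fun y hy => csInf_le ⟨b, fun y' hy' => hsub hy'⟩ hy⟩
    · obtain ⟨b, hb⟩ := hba
      have hsub : {y : ℝ | e y = 0} ⊆ Iic b := by
        intro x₀ hx₀
        by_contra hlt
        rw [mem_Iic, not_le] at hlt
        have hmax : ∀ᶠ y in 𝓝 x₀, e y ≤ e x₀ := by
          filter_upwards [Ioi_mem_nhds hlt] with y hy
          have h1 : ¬ 0 < e y := fun hc => absurd (hb hc) (not_le.mpr hy)
          have h2 : e x₀ = 0 := hx₀
          linarith [not_lt.mp h1]
        exact key x₀ hx₀ (IsLocalMax.deriv_eq_zero hmax)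
      right
      exact ⟨sSup _, hZclosed.csSup_mem hZne ⟨b, fun y hy => hsub hy⟩,
        fun y hy => le_csSup ⟨b, fun y' hy' => hsub hy'⟩ hy⟩
end
end

section
/- Fix a period L > 0, parameters d, α > 0 and admissible nonlinearities f₁, f₂ with zeros a₁, a₂. Let e be a segregated stationary equilibrium. If e⁻¹({0}) has a minimum, then sup_{x∈[−(n+1)L, −nL]} ( |e(x) − α a₁| + |e'(x)| + |e''(x)| ) → 0 as n → +∞. If e⁻¹({0}) has a maximum, then sup_{x∈[nL, (n+1)L]} ( |e(x) + d a₂| + |e'(x)| + |e''(x)| ) → 0 as n → +∞. -/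
open MeasureTheory Set Filter Topology Function

noncomputable section

lemma exists_reduce {L : ℝ} (hL : 0 < L) (x : ℝ) :
    ∃ y ∈ Ico (0:ℝ) L, ∃ n : ℤ, y = x - n * L :=
  ⟨x - ⌊x/L⌋ * L, ⟨Int.sub_floor_div_mul_nonneg x hL, Int.sub_floor_div_mul_lt x hL⟩,
    ⌊x/L⌋, rfl⟩

lemma periodic_bound {L : ℝ} (hL : 0 < L) {g : ℝ → ℝ → ℝ} (hgc : Continuous (uncurry g))
    (hgper : ∀ z x, g z (x + L) = g z x) (M : ℝ) (hM : 0 ≤ M) :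
    ∃ C, 0 < C ∧ ∀ z x, |z| ≤ M → |g z x| ≤ C := by
  obtain ⟨p, hpmem, hp⟩ := (((isCompact_Icc (a := -M) (b := M)).prod
      (isCompact_Icc (a := (0:ℝ)) (b := L)))).exists_isMaxOn
      (⟨(0, 0), by simp only [Set.mem_prod, Set.mem_Icc]
                   exact ⟨⟨by linarith, hM⟩, le_refl 0, hL.le⟩⟩ :
        (Icc (-M) M ×ˢ Icc (0:ℝ) L).Nonempty)
      ((continuous_abs.comp hgc).continuousOn)
  refine ⟨|g p.1 p.2| + 1, by positivity, fun z x hz => ?_⟩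
  obtain ⟨y, hy, n, hyx⟩ := exists_reduce hL x
  have hper : Function.Periodic (g z) L := fun t => hgper z t
  have h1 : g z y = g z x := by rw [hyx]; exact hper.sub_int_mul_eq n
  have h2 := hp (a := (z, y)) ⟨by simpa [abs_le] using hz, hy.1, hy.2.le⟩
  have h3 : |g z y| ≤ |g p.1 p.2| := h2
  rw [h1] at h3
  linarith

lemma periodic_small_near_root {L a : ℝ} (hL : 0 < L) {g : ℝ → ℝ → ℝ}
    (hgc : Continuous (uncurry g)) (hgper : ∀ z x, g z (x + L) = g z x)
    (hgroot : ∀ x, g a x = 0) :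
    ∀ ε > 0, ∃ δ > 0, ∀ z x, |z - a| ≤ δ → |g z x| < ε := by
  intro ε hε
  have hK : IsCompact (Icc (a-1) (a+1) ×ˢ Icc (0:ℝ) L) :=
    (isCompact_Icc).prod isCompact_Icc
  have huc := hK.uniformContinuousOn_of_continuous hgc.continuousOn
  rw [Metric.uniformContinuousOn_iff] at huc
  obtain ⟨δ, hδ, hδ'⟩ := huc ε hε
  refine ⟨min (δ/2) 1, by positivity, fun z x hz => ?_⟩
  have hz1 : |z - a| ≤ 1 := le_trans hz (min_le_right _ _)
  have hz2 : |z - a| < δ := lt_of_le_of_lt (le_trans hz (min_le_left _ _)) (by linarith)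
  obtain ⟨y, hy, n, hyx⟩ := exists_reduce hL x
  have hper : Function.Periodic (g z) L := fun t => hgper z t
  have h1 : g z y = g z x := by rw [hyx]; exact hper.sub_int_mul_eq n
  have hmemz : (z, y) ∈ Icc (a-1) (a+1) ×ˢ Icc (0:ℝ) L := by
    constructor
    · rw [abs_le] at hz1; constructor <;> simp <;> linarith [hz1.1, hz1.2]
    · exact ⟨hy.1, hy.2.le⟩
  have hmema : (a, y) ∈ Icc (a-1) (a+1) ×ˢ Icc (0:ℝ) L := by
    constructor
    · constructor <;> simp <;> linarith
    · exact ⟨hy.1, hy.2.le⟩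
  have hd : dist ((z,y) : ℝ × ℝ) (a,y) < δ := by
    rw [Prod.dist_eq]
    simp only [dist_self]
    rw [Real.dist_eq]
    simpa using lt_of_le_of_lt (le_max_left _ 0) (by simpa using hz2)
  have := hδ' _ hmemz _ hmema hd
  have h2 : dist (g z y) (g a y) < ε := this
  rw [hgroot y] at h2
  rw [Real.dist_eq, sub_zero] at h2
  rw [h1] at h2
  exact h2

lemma contDiff_two_deriv {u : ℝ → ℝ} (hu : ContDiff ℝ 2 u) :
    Differentiable ℝ u ∧ Differentiable ℝ (deriv u) ∧ Continuous (deriv (deriv u)) := by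
  have h2 : ContDiff ℝ (1 + 1) u := by norm_num [hu]
  obtain ⟨hd, -, hd1⟩ := contDiff_succ_iff_deriv.mp h2
  exact ⟨hd, hd1.differentiable one_ne_zero, hd1.continuous_deriv le_rfl⟩

lemma taylor_identity {u : ℝ → ℝ} (hu : ContDiff ℝ 2 u) (x₀ x : ℝ) :
    u x = u x₀ + deriv u x₀ * (x - x₀) + ∫ s in x₀..x, (x - s) * deriv (deriv u) s := by
  obtain ⟨hd, hd1, hc2⟩ := contDiff_two_deriv hu
  have hF : ∀ s : ℝ, HasDerivAt (fun t => (x - t) * deriv u t + u t)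
      ((x - s) * deriv (deriv u) s) s := by
    intro s
    have h1 : HasDerivAt (fun t : ℝ => x - t) (-1) s := by
      simpa using (hasDerivAt_id s).const_sub x
    have h2 : HasDerivAt (deriv u) (deriv (deriv u) s) s := (hd1 s).hasDerivAt
    have h3 := (h1.mul h2).add (hd s).hasDerivAt
    refine h3.congr_deriv ?_
    ring
  have hint : IntervalIntegrable (fun s => (x - s) * deriv (deriv u) s) volume x₀ x :=
    (Continuous.mul (by continuity) hc2).intervalIntegrable _ _
  have := intervalIntegral.integral_eq_sub_of_hasDerivAt (fun s _ => hF s) hint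
  rw [this]
  ring

lemma second_deriv_test_max {E H : ℝ → ℝ} {x G' : ℝ}
    (hE : ∀ᶠ y in 𝓝 x, HasDerivAt E (H y) y) (hH : HasDerivAt H G' x)
    (hmax : IsLocalMax E x) : G' ≤ 0 := by
  by_contra hG
  push_neg at hG
  have hHx : H x = 0 := hmax.hasDerivAt_eq_zero hE.self_of_nhds
  have hslope : Tendsto (slope H x) (𝓝[≠] x) (𝓝 G') :=
    hasDerivAt_iff_tendsto_slope.mp hH
  have hev : ∀ᶠ y in 𝓝[≠] x, 0 < slope H x y := hslope.eventually_const_lt hG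
  have hev' : ∀ᶠ y in 𝓝[>] x, 0 < H y := by
    have : ∀ᶠ y in 𝓝[>] x, 0 < slope H x y :=
      hev.filter_mono (nhdsWithin_mono x (fun y hy => ne_of_gt hy))
    filter_upwards [this, self_mem_nhdsWithin] with y hy (hy2 : x < y)
    have hsl : slope H x y = (H y - H x) / (y - x) := slope_def_field H x y
    rw [hsl, hHx, sub_zero] at hy
    have := mul_pos hy (sub_pos.mpr hy2)
    rwa [div_mul_cancel₀] at this
    linarith
  have hmax' : ∀ᶠ y in 𝓝[>] x, E y ≤ E x := hmax.filter_mono nhdsWithin_le_nhds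
  have hE' : ∀ᶠ y in 𝓝[>] x, HasDerivAt E (H y) y := hE.filter_mono nhdsWithin_le_nhds
  obtain ⟨b, hb, hIoo⟩ := mem_nhdsGT_iff_exists_Ioo_subset.mp
    ((hev'.and (hmax'.and hE')).filter_mono le_rfl)
  obtain ⟨r, hr, hball⟩ := Metric.eventually_nhds_iff.mp hE
  set y := min ((x + b) / 2) (x + r / 2) with hy
  have hxy : x < y := by
    rw [hy]
    apply lt_min <;> [skip; linarith]
    · have : x < b := hb
      linarith
  have hyb : y < b := lt_of_le_of_lt (min_le_left _ _) (by have : x < b := hb; linarith)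
  have hmem : ∀ z ∈ Ioc x y, 0 < H z ∧ E z ≤ E x ∧ HasDerivAt E (H z) z := by
    intro z hz
    exact hIoo ⟨hz.1, lt_of_le_of_lt hz.2 hyb⟩
  have hcont : ContinuousOn E (Icc x y) := by
    intro z hz
    rcases eq_or_lt_of_le hz.1 with rfl | hlt
    · exact (hE.self_of_nhds).continuousAt.continuousWithinAt
    · exact ((hmem z ⟨hlt, hz.2⟩).2.2).continuousAt.continuousWithinAt
  have hderiv : ∀ z ∈ interior (Icc x y), 0 < deriv E z := by
    rw [interior_Icc]
    intro z hz
    have h := hmem z ⟨hz.1, hz.2.le⟩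
    rw [h.2.2.deriv]
    exact h.1
  have hstrict := strictMonoOn_of_deriv_pos (convex_Icc x y) hcont hderiv
  have := hstrict (left_mem_Icc.mpr hxy.le) (right_mem_Icc.mpr hxy.le) hxy
  exact absurd this (not_lt.mpr (hmem y ⟨hxy, le_rfl⟩).2.1)

lemma second_deriv_test_min {E H : ℝ → ℝ} {x G' : ℝ}
    (hE : ∀ᶠ y in 𝓝 x, HasDerivAt E (H y) y) (hH : HasDerivAt H G' x)
    (hmin : IsLocalMin E x) : 0 ≤ G' := by
  have := second_deriv_test_max (E := fun y => -E y) (H := fun y => -H y) (x := x)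
    (G' := -G') (by filter_upwards [hE] with y hy using hy.neg) hH.neg hmin.neg
  linarith

lemma deriv_bound_of_bounds {u : ℝ → ℝ} (hu : ContDiff ℝ 2 u) {x A B : ℝ}
    (hA : ∀ y ∈ Icc x (x+1), |u y| ≤ A)
    (hB : ∀ y ∈ Icc x (x+1), |deriv (deriv u) y| ≤ B) :
    |deriv u x| ≤ 2*A + B := by
  obtain ⟨hd, hd1, hc2⟩ := contDiff_two_deriv hu
  obtain ⟨ξ, hξ, hξ'⟩ := exists_hasDerivAt_eq_slope u (deriv u) (by linarith : x < x + 1)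
    hd.continuous.continuousOn (fun y _ => (hd y).hasDerivAt)
  obtain ⟨ζ, hζ, hζ'⟩ := exists_hasDerivAt_eq_slope (deriv u) (deriv (deriv u)) hξ.1
    hd1.continuous.continuousOn (fun y _ => (hd1 y).hasDerivAt)
  have h1 : |deriv u ξ| ≤ 2 * A := by
    rw [hξ']
    simp only [add_sub_cancel_left, div_one]
    calc |u (x+1) - u x| ≤ |u (x+1)| + |u x| := abs_sub _ _
      _ ≤ A + A := add_le_add (hA _ ⟨by linarith, le_rfl⟩) (hA _ ⟨le_rfl, by linarith⟩)
      _ = 2 * A := by ring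
  have hne : ξ - x ≠ 0 := by have := hξ.1; intro h; linarith [sub_eq_zero.mp h]
  have h2 : deriv u x = deriv u ξ - (ξ - x) * deriv (deriv u) ζ := by
    rw [hζ']
    field_simp
    ring
  rw [h2]
  have h3 : |(ξ - x) * deriv (deriv u) ζ| ≤ 1 * B := by
    rw [abs_mul]
    apply mul_le_mul _ (hB ζ ⟨hζ.1.le, by linarith [hζ.2, hξ.2]⟩) (abs_nonneg _) zero_le_one
    rw [abs_le]
    constructor <;> [linarith [hξ.1]; linarith [hξ.2]]
  calc |deriv u ξ - (ξ - x) * deriv (deriv u) ζ|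
      ≤ |deriv u ξ| + |(ξ - x) * deriv (deriv u) ζ| := abs_sub _ _
    _ ≤ 2*A + 1*B := add_le_add h1 h3
    _ = 2*A + B := by ring

set_option maxHeartbeats 1000000 in
lemma tail_limit {L δ a c M : ℝ} (hL : 0 < L) (hδ : 0 < δ) (ha : 0 < a)
    {g : ℝ → ℝ → ℝ} (hgc : Continuous (uncurry g))
    (hgper : ∀ z x, g z (x + L) = g z x)
    (hganti : ∀ x, StrictAnti (fun z => g z x))
    (hgroot : ∀ x, g a x = 0)
    {u : ℝ → ℝ} (hu : ContDiff ℝ 2 u)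
    (hub : ∀ x, |u x| ≤ M)
    (hpos : ∀ x < c, 0 < u x)
    (hode : ∀ x < c, -(δ * deriv (deriv u) x) = u x * g (u x) x)
    (hmono : ∀ x, Monotone (fun n : ℕ => u (x - n * L))) :
    ∀ ε > 0, ∃ R, ∀ x ≤ R, |u x - a| + |deriv u x| + |deriv (deriv u) x| < ε := by
  obtain ⟨hd, hd1, hc2⟩ := contDiff_two_deriv hu
  have hM0 : 0 ≤ M := le_trans (abs_nonneg _) (hub 0)
  obtain ⟨Cg, hCg, hCgb⟩ := periodic_bound hL hgc hgper M hM0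
  -- second derivative formula and bound
  have hddpt : ∀ s, s < c → deriv (deriv u) s = -(u s * g (u s) s) / δ := by
    intro s hs
    have := hode s hs
    field_simp
    linarith
  have hdd : ∀ s, s < c → |deriv (deriv u) s| ≤ M * Cg / δ := by
    intro s hs
    rw [hddpt s hs, abs_div, abs_neg, abs_mul, abs_of_pos hδ]
    gcongr
    · exact hub s
    · exact hCgb _ _ (hub s)
  set C2 : ℝ := M * Cg / δ with hC2def
  have hC20 : 0 ≤ C2 := by positivity
  set C1 : ℝ := 2 * M + C2 with hC1def
  have hC10 : 0 ≤ C1 := by positivity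
  have hdu : ∀ s, s ≤ c - 2 → |deriv u s| ≤ C1 := by
    intro s hs
    exact deriv_bound_of_bounds hu (fun y _ => hub y)
      (fun y hy => hdd y (by rcases hy with ⟨h1, h2⟩; linarith))
  have hulip : ∀ s t, s ≤ c - 2 → t ≤ c - 2 → |u s - u t| ≤ C1 * |s - t| := by
    have key : ∀ s t, s < t → t ≤ c - 2 → |u s - u t| ≤ C1 * |s - t| := by
      intro s t hst htc
      obtain ⟨ξ, hξ, hξ'⟩ := exists_hasDerivAt_eq_slope u (deriv u) hst
        hd.continuous.continuousOn (fun y _ => (hd y).hasDerivAt)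
      have h1 : u t - u s = deriv u ξ * (t - s) := by
        have hne : t - s ≠ 0 := sub_ne_zero.mpr (ne_of_gt hst)
        rw [hξ', div_mul_cancel₀ _ hne]
      have h2 : |u s - u t| = |deriv u ξ| * |t - s| := by
        rw [abs_sub_comm, h1, abs_mul]
      rw [h2, abs_sub_comm s t]
      exact mul_le_mul_of_nonneg_right (hdu ξ (by linarith [hξ.2])) (abs_nonneg _)
    intro s t hs ht
    rcases lt_trichotomy s t with h | h | h
    · exact key s t h ht
    · simp [h]
    · rw [abs_sub_comm (u s), abs_sub_comm s]; exact key t s h hs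
  -- the limit profile E
  set E : ℝ → ℝ := fun x => ⨆ n : ℕ, u (x - n * L) with hEdef
  have hbdd : ∀ x, BddAbove (range fun n : ℕ => u (x - n * L)) := by
    intro x
    refine ⟨M, ?_⟩
    rintro z ⟨n, rfl⟩
    exact (abs_le.mp (hub _)).2
  have hElim : ∀ x, Tendsto (fun n : ℕ => u (x - n * L)) atTop (𝓝 (E x)) :=
    fun x => tendsto_atTop_ciSup (hmono x) (hbdd x)
  have hEle : ∀ x (n : ℕ), u (x - n * L) ≤ E x := fun x n => le_ciSup (hbdd x) n
  have huE : ∀ x, u x ≤ E x := by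
    intro x
    simpa using hEle x 0
  have hEleM : ∀ x, E x ≤ M := fun x => ciSup_le fun n => (abs_le.mp (hub _)).2
  have hEper : ∀ x, E (x - L) = E x := by
    intro x
    have h1 : Tendsto (fun n : ℕ => u (x - L - n * L)) atTop (𝓝 (E (x - L))) := hElim _
    have h2 : Tendsto (fun n : ℕ => u (x - L - n * L)) atTop (𝓝 (E x)) := by
      have h3 := (hElim x).comp (tendsto_add_atTop_nat 1)
      convert h3 using 2 with n
      simp only [comp_apply]
      push_cast
      ring_nf
    exact tendsto_nhds_unique h1 h2
  have hEpos : ∀ x, 0 < E x := by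
    intro x
    obtain ⟨n, hn⟩ := exists_nat_gt ((x - c) / L + 1)
    have hnc : x - n * L < c := by
      have : (x - c) / L < n := by linarith
      have := (div_lt_iff₀ hL).mp this
      linarith
    exact lt_of_lt_of_le (hpos _ hnc) (hEle x n)
  have hElip : ∀ s t, s ≤ c - 2 → t ≤ c - 2 → |E s - E t| ≤ C1 * |s - t| := by
    intro s t hs ht
    have h1 : Tendsto (fun n : ℕ => |u (s - n * L) - u (t - n * L)|) atTop
        (𝓝 |E s - E t|) := ((hElim s).sub (hElim t)).abs
    refine le_of_tendsto h1 (Eventually.of_forall fun n => ?_)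
    have h2 := hulip (s - n * L) (t - n * L)
      (by nlinarith [mul_nonneg (Nat.cast_nonneg n : (0:ℝ) ≤ (n:ℝ)) hL.le])
      (by nlinarith [mul_nonneg (Nat.cast_nonneg n : (0:ℝ) ≤ (n:ℝ)) hL.le])
    simpa using h2
  have hEcont : ContinuousOn E (Iic (c - 2)) := by
    have : LipschitzOnWith C1.toNNReal E (Iic (c - 2)) := by
      rw [lipschitzOnWith_iff_dist_le_mul]
      intro s hs t ht
      rw [Real.dist_eq, Real.dist_eq, Real.coe_toNNReal _ hC10]
      exact hElip s t hs ht
    exact this.continuousOn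
  -- limiting equation setup
  set x₀ : ℝ := c - 4 with hx₀def
  set x₁ : ℝ := c - 3 with hx₁def
  set G : ℝ → ℝ := fun s => -(E s * g (E s) s) / δ with hGdef
  have hGcont : ContinuousOn G (Iic (c - 2)) := by
    apply ContinuousOn.div_const
    apply ContinuousOn.neg
    exact hEcont.mul (hgc.comp_continuousOn (hEcont.prodMk (continuousOn_id)) :)
  have hGlim : ∀ s, s < c →
      Tendsto (fun j : ℕ => deriv (deriv u) (s - j * L)) atTop (𝓝 (G s)) := by
    intro s hs
    have hterm : ∀ j : ℕ,
        deriv (deriv u) (s - j * L) = -(u (s - j*L) * g (u (s - j*L)) s) / δ := by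
      intro j
      have hjL : (0:ℝ) ≤ (j:ℝ) * L := mul_nonneg (Nat.cast_nonneg j) hL.le
      have hlt : s - j * L < c := by linarith
      rw [hddpt _ hlt]
      have hper : Function.Periodic (g (u (s - j*L))) L := fun t => hgper _ t
      rw [hper.sub_nat_mul_eq j]
    have hΦ : Continuous (fun z : ℝ => -(z * g z s) / δ) := by
      apply Continuous.div_const
      exact (continuous_id.mul (hgc.comp (continuous_id.prodMk continuous_const))).neg
    have h2 := (hΦ.tendsto (E s)).comp (hElim s)
    refine Tendsto.congr (fun j => ?_) h2
    exact (hterm j).symm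
  have hTay : ∀ (j : ℕ) (t : ℝ), u (t - j*L) = u (x₀ - j*L) + deriv u (x₀ - j*L) * (t - x₀)
      + ∫ σ in x₀..t, (t - σ) * deriv (deriv u) (σ - j*L) := by
    intro j t
    have h0 := taylor_identity hu (x₀ - j*L) (t - j*L)
    have hch : (∫ s in (x₀ - j*L)..(t - j*L), (t - j*L - s) * deriv (deriv u) s)
        = ∫ σ in x₀..t, (t - σ) * deriv (deriv u) (σ - j*L) := by
      rw [← intervalIntegral.integral_comp_sub_right
        (fun s => (t - j*L - s) * deriv (deriv u) s) (j*L)]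
      apply intervalIntegral.integral_congr
      intro σ _
      ring_nf
    rw [hch] at h0
    rw [h0]
    ring_nf
  set IB : ℝ := ∫ σ in x₀..x₁, (x₁ - σ) * G σ with hIBdef
  set B : ℝ := E x₁ - E x₀ - IB with hBdef
  have hIlim : ∀ t, c - 5 - 2*L < t → t < c - 2 →
      Tendsto (fun j : ℕ => ∫ σ in x₀..t, (t - σ) * deriv (deriv u) (σ - j*L)) atTop
        (𝓝 (∫ σ in x₀..t, (t - σ) * G σ)) := by
    intro t h1t h2t
    have hx₀c2 : x₀ < c - 2 := by rw [hx₀def]; linarith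
    have habs : ∀ σ ∈ uIoc x₀ t, |t - σ| ≤ |t - x₀| ∧ σ < c := by
      intro σ hσ
      have h1 : min x₀ t < σ := hσ.1
      have h2 : σ ≤ max x₀ t := hσ.2
      constructor
      · rcases le_total x₀ t with h | h
        · rw [min_eq_left h] at h1; rw [max_eq_right h] at h2
          rw [abs_of_nonneg (by linarith), abs_of_nonneg (by linarith)]; linarith
        · rw [min_eq_right h] at h1; rw [max_eq_left h] at h2
          rw [abs_of_nonpos (by linarith), abs_of_nonpos (by linarith)]; linarith
      · rcases le_total x₀ t with h | h
        · rw [max_eq_right h] at h2; linarith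
        · rw [max_eq_left h] at h2; linarith
    apply intervalIntegral.tendsto_integral_filter_of_dominated_convergence
      (bound := fun _ => |t - x₀| * C2)
    · apply Eventually.of_forall
      intro j
      apply Continuous.aestronglyMeasurable
      exact (continuous_const.sub continuous_id).mul
        (hc2.comp (continuous_id.sub continuous_const))
    · apply Eventually.of_forall
      intro j
      apply ae_of_all
      intro σ hσ
      obtain ⟨hb1, hb2⟩ := habs σ hσ
      have hjL : (0:ℝ) ≤ (j:ℝ) * L := mul_nonneg (Nat.cast_nonneg j) hL.le
      have hσc : σ - j * L < c := by linarith
      rw [Real.norm_eq_abs, abs_mul]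
      exact mul_le_mul hb1 (hdd _ hσc) (abs_nonneg _) (abs_nonneg _)
    · exact intervalIntegrable_const
    · apply ae_of_all
      intro σ hσ
      exact tendsto_const_nhds.mul (hGlim σ (habs σ hσ).2)
  have hBlim : Tendsto (fun j : ℕ => deriv u (x₀ - j*L)) atTop (𝓝 B) := by
    have heq : ∀ j : ℕ, deriv u (x₀ - j*L) = u (x₁ - j*L) - u (x₀ - j*L)
        - ∫ σ in x₀..x₁, (x₁ - σ) * deriv (deriv u) (σ - j*L) := by
      intro j
      have h0 := hTay j x₁
      have hx10 : x₁ - x₀ = 1 := by rw [hx₀def, hx₁def]; ring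
      rw [hx10, mul_one] at h0
      linarith
    rw [show B = E x₁ - E x₀ - IB from hBdef]
    simp_rw [heq]
    exact ((hElim x₁).sub (hElim x₀)).sub
      (hIlim x₁ (by rw [hx₁def]; linarith) (by rw [hx₁def]; linarith))
  have hEform : ∀ t, c - 5 - 2*L < t → t < c - 2 →
      E t = E x₀ + B * (t - x₀) + ∫ σ in x₀..t, (t - σ) * G σ := by
    intro t h1 h2
    have hRHS : Tendsto (fun j : ℕ => u (x₀ - j*L) + deriv u (x₀ - j*L) * (t - x₀)
        + ∫ σ in x₀..t, (t - σ) * deriv (deriv u) (σ - j*L)) atTop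
        (𝓝 (E x₀ + B * (t - x₀) + ∫ σ in x₀..t, (t - σ) * G σ)) :=
      ((hElim x₀).add (hBlim.mul_const _)).add (hIlim t h1 h2)
    exact tendsto_nhds_unique (hElim t) (hRHS.congr (fun j => (hTay j t).symm))
  -- E is C² and satisfies the limiting ODE on J
  set W : ℝ → ℝ := fun t => ∫ σ in x₀..t, G σ with hWdef
  set V : ℝ → ℝ := fun t => ∫ σ in x₀..t, σ * G σ with hVdef
  have hGIio : ContinuousOn G (Iio (c - 2)) := hGcont.mono Iio_subset_Iic_self
  have hx₀mem : x₀ ∈ Iio (c - 2) := by rw [hx₀def]; simp; linarith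
  have hsub : ∀ t, t < c - 2 → uIcc x₀ t ⊆ Iio (c - 2) := by
    intro t ht y hy
    have h1 := hy.2
    have h2 : max x₀ t < c - 2 := max_lt (by rw [hx₀def]; linarith) ht
    exact lt_of_le_of_lt h1 h2
  have hWd : ∀ t, t < c - 2 → HasDerivAt W (G t) t := by
    intro t ht
    apply intervalIntegral.integral_hasDerivAt_right
    · exact (hGIio.mono (hsub t ht)).intervalIntegrable
    · exact hGIio.stronglyMeasurableAtFilter isOpen_Iio t ht
    · exact hGIio.continuousAt (Iio_mem_nhds ht)
  have hVcont : ContinuousOn (fun σ => σ * G σ) (Iio (c - 2)) :=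
    continuousOn_id.mul hGIio
  have hVd : ∀ t, t < c - 2 → HasDerivAt V (t * G t) t := by
    intro t ht
    apply intervalIntegral.integral_hasDerivAt_right
    · exact (hVcont.mono (hsub t ht)).intervalIntegrable
    · exact hVcont.stronglyMeasurableAtFilter isOpen_Iio t ht
    · exact hVcont.continuousAt (Iio_mem_nhds ht)
  set H : ℝ → ℝ := fun t => B + W t with hHdef
  have hHd : ∀ t, t < c - 2 → HasDerivAt H (G t) t :=
    fun t ht => (hWd t ht).const_add B
  have hsplit : ∀ t, t < c - 2 → (∫ σ in x₀..t, (t - σ) * G σ) = t * W t - V t := by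
    intro t ht
    have hi1 : IntervalIntegrable G volume x₀ t := (hGIio.mono (hsub t ht)).intervalIntegrable
    have hi2 : IntervalIntegrable (fun σ => σ * G σ) volume x₀ t :=
      (hVcont.mono (hsub t ht)).intervalIntegrable
    have h0 : (∫ σ in x₀..t, (t - σ) * G σ) = ∫ σ in x₀..t, (t * G σ - σ * G σ) := by
      apply intervalIntegral.integral_congr
      intro σ _
      ring
    rw [h0, intervalIntegral.integral_sub (hi1.const_mul t) hi2,
      intervalIntegral.integral_const_mul]
  have hEd : ∀ t, t ∈ Ioo (c - 5 - 2*L) (c - 2) → HasDerivAt E (H t) t := by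
    intro t ht
    have hF : HasDerivAt (fun y => E x₀ + B * (y - x₀) + (y * W y - V y)) (B + W t) t := by
      have h1 : HasDerivAt (fun y : ℝ => E x₀ + B * (y - x₀)) B t := by
        simpa using (((hasDerivAt_id t).sub_const x₀).const_mul B).const_add (E x₀)
      have h2 : HasDerivAt (fun y => y * W y) (1 * W t + t * G t) t :=
        (hasDerivAt_id t).mul (hWd t ht.2)
      have h3 := hVd t ht.2
      refine (h1.add (h2.sub h3)).congr_deriv ?_
      ring
    rw [hHdef]
    apply hF.congr_of_eventuallyEq
    filter_upwards [Ioo_mem_nhds ht.1 ht.2] with y hy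
    rw [hEform y hy.1 hy.2, hsplit y hy.2]
  -- maximum principle: E ≡ a on the period cell P
  set P : Set ℝ := Icc (c - 3 - L) (c - 3) with hPdef
  have hPne : P.Nonempty := ⟨c - 3, ⟨by linarith, le_rfl⟩⟩
  have hPsub : P ⊆ Iic (c - 2) := fun y hy => le_trans hy.2 (by linarith)
  have hPJ : P ⊆ Ioo (c - 5 - 2*L) (c - 2) :=
    fun y hy => ⟨by linarith [hy.1], by linarith [hy.2]⟩
  have hEcontP : ContinuousOn E P := hEcont.mono hPsub
  have hshift : ∀ z ∈ P, ∀ y : ℝ, |y - z| < L → ∃ y' ∈ P, E y' = E y := by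
    intro z hz y hy
    obtain ⟨hya, hyb⟩ := abs_lt.mp hy
    rcases le_or_gt y (c - 3) with h1 | h1
    · rcases le_or_gt (c - 3 - L) y with h2 | h2
      · exact ⟨y, ⟨h2, h1⟩, rfl⟩
      · refine ⟨y + L, ⟨by linarith [hz.1], by linarith⟩, ?_⟩
        have h3 := hEper (y + L)
        simp only [add_sub_cancel_right] at h3
        exact h3.symm
    · exact ⟨y - L, ⟨by linarith, by linarith [hz.2]⟩, hEper y⟩
  obtain ⟨zM, hzM, hzMmax⟩ := (isCompact_Icc).exists_isMaxOn hPne hEcontP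
  obtain ⟨zm, hzm, hzmmin⟩ := (isCompact_Icc).exists_isMinOn hPne hEcontP
  have hlocM : IsLocalMax E zM := by
    filter_upwards [Metric.ball_mem_nhds zM hL] with y hy
    rw [Metric.mem_ball, Real.dist_eq] at hy
    obtain ⟨y', hy', hEy'⟩ := hshift zM hzM y hy
    rw [← hEy']
    exact hzMmax hy'
  have hlocm : IsLocalMin E zm := by
    filter_upwards [Metric.ball_mem_nhds zm hL] with y hy
    rw [Metric.mem_ball, Real.dist_eq] at hy
    obtain ⟨y', hy', hEy'⟩ := hshift zm hzm y hy
    rw [← hEy']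
    exact hzmmin hy'
  have hEnear : ∀ z ∈ P, ∀ᶠ y in 𝓝 z, HasDerivAt E (H y) y := by
    intro z hz
    filter_upwards [Ioo_mem_nhds (hPJ hz).1 (hPJ hz).2] with y hy using hEd y hy
  have hGM : G zM ≤ 0 :=
    second_deriv_test_max (hEnear zM hzM) (hHd zM (hPJ hzM).2) hlocM
  have hGm : 0 ≤ G zm :=
    second_deriv_test_min (hEnear zm hzm) (hHd zm (hPJ hzm).2) hlocm
  have hEzM : E zM ≤ a := by
    by_contra hgt
    push_neg at hgt
    have h1 : g (E zM) zM < 0 := by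
      have h2 := hganti zM hgt
      simp only at h2
      rwa [hgroot zM] at h2
    have h3 : G zM = -(E zM * g (E zM) zM) / δ := rfl
    have h4 : 0 < G zM := by
      rw [h3]
      apply div_pos _ hδ
      nlinarith [hEpos zM]
    linarith
  have hEzm : a ≤ E zm := by
    by_contra hlt
    push_neg at hlt
    have h1 : 0 < g (E zm) zm := by
      have h2 := hganti zm hlt
      simp only at h2
      rwa [hgroot zm] at h2
    have h3 : G zm = -(E zm * g (E zm) zm) / δ := rfl
    have h4 : G zm < 0 := by
      rw [h3]
      apply div_neg_of_neg_of_pos _ hδ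
      nlinarith [hEpos zm]
    linarith
  have hEP : ∀ y ∈ P, E y = a :=
    fun y hy => le_antisymm (le_trans (hzMmax hy) hEzM) (le_trans hEzm (hzmmin hy))
  -- Dini-type uniform convergence on P
  have hDini : ∀ ε > 0, ∃ J₀ : ℕ, ∀ j : ℕ, J₀ ≤ j → ∀ y ∈ P, |u (y - j * L) - a| < ε := by
    intro ε hε
    set O : ℕ → Set ℝ := fun j => {y | a - ε < u (y - j * L)} with hOdef
    have hOopen : ∀ j, IsOpen (O j) := by
      intro j
      have h0 : O j = (fun y => u (y - j*L)) ⁻¹' (Ioi (a - ε)) := rfl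
      rw [h0]
      exact (hd.continuous.comp (continuous_id.sub continuous_const)).isOpen_preimage
        _ isOpen_Ioi
    have hcover : P ⊆ ⋃ j : ℕ, O j := by
      intro y hy
      have h1 : Tendsto (fun j : ℕ => u (y - j*L)) atTop (𝓝 a) := by
        have h2 := hElim y
        rwa [hEP y hy] at h2
      have h2 : ∀ᶠ j : ℕ in atTop, a - ε < u (y - j*L) :=
        h1.eventually_const_lt (by linarith)
      obtain ⟨j, hj⟩ := h2.exists
      exact mem_iUnion.mpr ⟨j, hj⟩
    obtain ⟨tf, htf⟩ := (isCompact_Icc (a := c - 3 - L) (b := c - 3)).elim_finite_subcover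
      O hOopen hcover
    refine ⟨tf.sup id, fun j hj y hy => ?_⟩
    have hyt := htf hy
    rw [mem_iUnion₂] at hyt
    obtain ⟨i, hit, hiO⟩ := hyt
    have hij : i ≤ j := le_trans (Finset.le_sup (f := id) hit) hj
    have hm := hmono y hij
    simp only at hm
    have hub' : u (y - j*L) ≤ a := by
      rw [← hEP y hy]
      exact hEle y j
    have hlb : a - ε < u (y - j*L) := lt_of_lt_of_le hiO hm
    rw [abs_lt]
    constructor <;> linarith
  -- pointwise convergence at -∞
  have hUlim : ∀ ε > 0, ∃ R, ∀ x ≤ R, |u x - a| < ε ∧ x < c := by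
    intro ε hε
    obtain ⟨J₀, hJ₀⟩ := hDini ε hε
    refine ⟨c - 3 - (J₀ + 1) * L, fun x hx => ?_⟩
    have hxc : x < c := by nlinarith [(Nat.cast_nonneg J₀ : (0:ℝ) ≤ (J₀:ℝ)), hL]
    set t : ℝ := (c - 3 - x) / L with htdef
    have ht0 : (J₀ + 1 : ℝ) ≤ t := by
      rw [htdef, le_div_iff₀ hL]
      linarith
    have htnn : 0 ≤ t := le_trans (by positivity) ht0
    set j : ℕ := ⌊t⌋₊ with hjdef
    have hj1 : (j : ℝ) ≤ t := Nat.floor_le htnn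
    have hj2 : t - 1 < j := Nat.sub_one_lt_floor t
    have hJj : J₀ ≤ j := by
      have h5 : (J₀ : ℝ) ≤ (j : ℝ) := by push_cast; linarith
      exact_mod_cast h5
    have ht' : t * L = c - 3 - x := by
      rw [htdef]
      field_simp
    have hyP : x + j * L ∈ P := by
      constructor
      · have h6 : (t - j) * L < 1 * L := mul_lt_mul_of_pos_right (by linarith) hL
        nlinarith
      · have h6 : 0 ≤ (t - j) * L := mul_nonneg (by linarith) hL.le
        nlinarith
    have h7 := hJ₀ j hJj (x + j * L) hyP
    rw [show x + j * L - j * L = x by ring] at h7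
    exact ⟨h7, hxc⟩
  -- final assembly
  intro ε hε
  have hε5 : 0 < ε/5 := by linarith
  obtain ⟨δ₀, hδ₀, hδ₀'⟩ := periodic_small_near_root hL hgc hgper hgroot
    (δ * (ε/5) / (M+1)) (by positivity)
  obtain ⟨R₁, hR₁⟩ := hUlim (min (ε/5) δ₀) (lt_min hε5 hδ₀)
  have hdd_small : ∀ y, y ≤ R₁ → |deriv (deriv u) y| ≤ ε/5 := by
    intro y hy
    obtain ⟨h1, h3⟩ := hR₁ y hy
    have h2 : |u y - a| ≤ δ₀ := le_of_lt (lt_of_lt_of_le h1 (min_le_right _ _))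
    rw [hddpt y h3, abs_div, abs_neg, abs_mul, abs_of_pos hδ]
    have hg' : |g (u y) y| ≤ δ * (ε/5)/(M+1) := (hδ₀' (u y) y h2).le
    have hub1 : |u y| ≤ M + 1 := le_trans (hub y) (by linarith)
    have h4 : |u y| * |g (u y) y| ≤ (M+1) * (δ * (ε/5)/(M+1)) :=
      mul_le_mul hub1 hg' (abs_nonneg _) (by linarith)
    have h5 : (M+1) * (δ * (ε/5)/(M+1)) / δ = ε/5 := by
      field_simp
    calc |u y| * |g (u y) y| / δ ≤ (M+1) * (δ * (ε/5)/(M+1)) / δ := by gcongr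
      _ = ε/5 := h5
  have hdu_small : ∀ y, y ≤ R₁ - 1 → |deriv u y| ≤ 2*(ε/5) + ε/5 := by
    intro y hy
    have hvder : deriv (fun z => u z - a) = deriv u := by
      funext z
      exact deriv_sub_const a
    have h := deriv_bound_of_bounds (u := fun z => u z - a) (hu.sub contDiff_const)
      (x := y) (A := ε/5) (B := ε/5) ?_ ?_
    · rwa [hvder] at h
    · intro z hz
      exact le_of_lt (lt_of_lt_of_le (hR₁ z (by linarith [hz.2])).1 (min_le_left _ _))
    · intro z hz
      rw [hvder]
      exact hdd_small z (by linarith [hz.2])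
  refine ⟨R₁ - 1, fun x hx => ?_⟩
  have h1 : |u x - a| < ε/5 :=
    lt_of_lt_of_le (hR₁ x (by linarith)).1 (min_le_left _ _)
  have h2 : |deriv u x| ≤ 2*(ε/5) + ε/5 := hdu_small x hx
  have h3 : |deriv (deriv u) x| ≤ ε/5 := hdd_small x (by linarith)
  linarith

/-- behavior of a segregated stationary equilibrium at infinity, in
`C²` norm on the period cells. -/
theorem seg_equilibrium_behavior_at_infinity
    (L d α a₁ a₂ : ℝ) (hL : 0 < L) (hd : 0 < d) (hα : 0 < α)
    (f₁ f₂ : ℝ → ℝ → ℝ) (hf₁ : Admissible L f₁ a₁) (hf₂ : Admissible L f₂ a₂)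
    (e : ℝ → ℝ) (he : SegEquilibrium L d α f₁ f₂ e) :
    ((∃ m, IsLeast {y : ℝ | e y = 0} m) →
      ∀ ε > 0, ∃ N : ℕ, ∀ n : ℕ, N ≤ n →
        ∀ x ∈ Icc (-((n : ℝ) + 1) * L) (-(n : ℝ) * L),
          |e x - α * a₁| + |deriv e x| + |deriv (deriv e) x| < ε) ∧
    ((∃ m, IsGreatest {y : ℝ | e y = 0} m) →
      ∀ ε > 0, ∃ N : ℕ, ∀ n : ℕ, N ≤ n →
        ∀ x ∈ Icc ((n : ℝ) * L) (((n : ℝ) + 1) * L),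
          |e x + d * a₂| + |deriv e x| + |deriv (deriv e) x| < ε) := by
  obtain ⟨M, hM⟩ := he.bdd
  obtain ⟨hed, hed1, hec2⟩ := contDiff_two_deriv he.smooth
  -- lattice monotonicity restated
  have hmono' : ∀ x : ℝ, ∀ {n k : ℕ}, n ≤ k → e (x - k * L) ∈ Ici (e (x - n * L)) := by
    intro x n k hnk
    have h0 := he.mono (x - k * L) (show (0:ℕ) ≤ k - n from Nat.zero_le _)
    simp only [Nat.cast_zero, zero_mul, add_zero] at h0
    have hcast : ((k - n : ℕ) : ℝ) = (k : ℝ) - n := by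
      rw [Nat.cast_sub hnk]
    rw [hcast] at h0
    have harg : x - k * L + ((k : ℝ) - n) * L = x - n * L := by ring
    rw [harg] at h0
    exact h0
  constructor
  · -- Part 1
    rintro ⟨m, hm⟩ ε hε
    -- e is positive left of m
    have hepos : ∀ x, x < m → 0 < e x := by
      intro x hx
      rcases lt_trichotomy (e x) 0 with h | h | h
      · exfalso
        obtain ⟨xp, hxp⟩ := he.pos
        obtain ⟨n, hn⟩ := exists_nat_gt ((xp - x) / L)
        have hw : xp - n * L < x := by
          have := (div_lt_iff₀ hL).mp hn
          linarith
        have hwpos : 0 < e (xp - n * L) := by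
          have := hmono' xp (show 0 ≤ n from Nat.zero_le _)
          simp only [Nat.cast_zero, zero_mul, sub_zero, mem_Ici] at this
          linarith
        have hIVT := intermediate_value_Icc' hw.le (hed.continuous.continuousOn
          (s := Icc (xp - n * L) x))
        have h0mem : (0:ℝ) ∈ Icc (e x) (e (xp - n * L)) := ⟨h.le, hwpos.le⟩
        obtain ⟨z, hz, hz0⟩ := hIVT h0mem
        have := hm.2 (show z ∈ {y | e y = 0} from hz0)
        linarith [hz.2]
      · exfalso
        have := hm.2 (show x ∈ {y | e y = 0} from h)
        linarith
      · exact h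
    have hgc : Continuous (uncurry fun z x => f₁ (z / α) x) := by
      have h0 : (uncurry fun z x => f₁ (z / α) x) =
          (uncurry f₁) ∘ (fun p : ℝ × ℝ => (p.1 / α, p.2)) := rfl
      rw [h0]
      exact hf₁.smooth.continuous.comp (by fun_prop)
    have hganti : ∀ x, StrictAnti fun z => f₁ (z / α) x := by
      intro x z w hzw
      exact hf₁.strict_anti x (by gcongr)
    have hgroot : ∀ x, f₁ ((α * a₁) / α) x = 0 := by
      intro x
      rw [mul_div_cancel_left₀ a₁ (ne_of_gt hα)]
      exact hf₁.zero_root x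
    have hode : ∀ x, x < m → -((1:ℝ) * deriv (deriv e) x) = e x * f₁ (e x / α) x := by
      intro x hx
      have hp := hepos x hx
      have h0 := he.ode x
      simp only [eta, max_eq_left hp.le, min_eq_right hp.le, neg_zero, mul_zero,
        sub_zero] at h0
      rw [one_mul]
      linarith [h0]
    have hmono2 : ∀ x : ℝ, Monotone fun n : ℕ => e (x - n * L) := by
      intro x n k hnk
      have := hmono' x hnk
      exact this
    have htail := tail_limit hL one_pos (mul_pos hα hf₁.zero_pos)
      hgc (fun z x => hf₁.periodic (z / α) x) hganti hgroot he.smooth hM hepos hode hmono2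
    obtain ⟨R, hR⟩ := htail ε hε
    refine ⟨⌈-R / L⌉₊, fun n hn x hx => ?_⟩
    have h1 : -R / L ≤ (⌈-R / L⌉₊ : ℝ) := Nat.le_ceil _
    have h2 : ((⌈-R / L⌉₊ : ℕ) : ℝ) ≤ (n : ℝ) := Nat.cast_le.mpr hn
    have h3 : -R ≤ (n : ℝ) * L := by
      have h4 : -R / L ≤ (n : ℝ) := by linarith
      calc -R = (-R / L) * L := by field_simp
        _ ≤ (n : ℝ) * L := mul_le_mul_of_nonneg_right h4 hL.le
    exact hR x (by linarith [hx.2])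
  · -- Part 2
    rintro ⟨m, hm⟩ ε hε
    have heneg : ∀ x, m < x → e x < 0 := by
      intro x hx
      rcases lt_trichotomy (e x) 0 with h | h | h
      · exact h
      · exact absurd (hm.2 (show x ∈ {y | e y = 0} from h)) (not_le.mpr hx)
      · exfalso
        obtain ⟨xn, hxn⟩ := he.neg
        obtain ⟨n, hn⟩ := exists_nat_gt ((x - xn) / L)
        have hw : x < xn + n * L := by
          have := (div_lt_iff₀ hL).mp hn
          linarith
        have hwneg : e (xn + n * L) < 0 := by
          have h4 := he.mono xn (Nat.zero_le n)
          simp only [Nat.cast_zero, zero_mul, add_zero] at h4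
          linarith [h4]
        have hIVT := intermediate_value_Icc' hw.le
          (hed.continuous.continuousOn (s := Icc x (xn + n * L)))
        obtain ⟨z, hz, hz0⟩ := hIVT ⟨hwneg.le, h.le⟩
        have := hm.2 (show z ∈ {y | e y = 0} from hz0)
        linarith [hz.1]
    -- the reflected function
    set u : ℝ → ℝ := fun y => -e (-y) with hudef
    have hneg1 : ∀ x : ℝ, HasDerivAt (fun y : ℝ => -y) (-1) x := by
      intro x
      exact hasDerivAt_neg x
    have hud : ∀ x, HasDerivAt u (deriv e (-x)) x := by
      intro x
      have h2 := ((hed (-x)).hasDerivAt).comp x (hneg1 x)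
      have h3 := h2.neg
      have h4 : -(deriv e (-x) * -1) = deriv e (-x) := by ring
      rw [h4] at h3
      exact h3
    have hu1 : deriv u = fun x => deriv e (-x) := funext fun x => (hud x).deriv
    have hud2 : ∀ x, HasDerivAt (fun y => deriv e (-y)) (-(deriv (deriv e) (-x))) x := by
      intro x
      have h2 := ((hed1 (-x)).hasDerivAt).comp x (hneg1 x)
      have h4 : deriv (deriv e) (-x) * -1 = -(deriv (deriv e) (-x)) := by ring
      rw [h4] at h2
      exact h2
    have hu2 : ∀ x, deriv (deriv u) x = -(deriv (deriv e) (-x)) := by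
      intro x
      rw [hu1]
      exact (hud2 x).deriv
    have husmooth : ContDiff ℝ 2 u := (he.smooth.comp (contDiff_id.neg)).neg
    have hub : ∀ x, |u x| ≤ M := by
      intro x
      rw [hudef]
      simp only [abs_neg]
      exact hM (-x)
    have hupos : ∀ x, x < -m → 0 < u x := by
      intro x hx
      have := heneg (-x) (by linarith)
      simpa [hudef] using this
    have hgc : Continuous (uncurry fun z x => f₂ (z / d) (-x)) := by
      have h0 : (uncurry fun z x => f₂ (z / d) (-x)) =
          (uncurry f₂) ∘ (fun p : ℝ × ℝ => (p.1 / d, -p.2)) := rfl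
      rw [h0]
      exact hf₂.smooth.continuous.comp (by fun_prop)
    have hgper : ∀ z x, f₂ (z / d) (-(x + L)) = f₂ (z / d) (-x) := by
      intro z x
      have h0 := hf₂.periodic (z / d) (-x - L)
      rw [show -x - L + L = -x by ring] at h0
      rw [show -(x + L) = -x - L by ring]
      exact h0.symm
    have hganti : ∀ x, StrictAnti fun z => f₂ (z / d) (-x) := by
      intro x z w hzw
      exact hf₂.strict_anti (-x) (by gcongr)
    have hgroot : ∀ x, f₂ ((d * a₂) / d) (-x) = 0 := by
      intro x
      rw [mul_div_cancel_left₀ a₂ (ne_of_gt hd)]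
      exact hf₂.zero_root (-x)
    have hode : ∀ x, x < -m → -(d * deriv (deriv u) x) = u x * f₂ (u x / d) (-x) := by
      intro x hx
      have hneg := heneg (-x) (by linarith)
      have h0 := he.ode (-x)
      simp only [eta, max_eq_right hneg.le, min_eq_left hneg.le, mul_zero,
        zero_sub] at h0
      have h1 : deriv (deriv e) (-x) = 1 / d * f₂ (-e (-x) / d) (-x) * -e (-x) := by
        linarith [h0]
      rw [hu2 x, h1, hudef]
      simp only
      field_simp
    have hmono2 : ∀ x : ℝ, Monotone fun n : ℕ => u (x - n * L) := by
      intro x n k hnk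
      have h4 := he.mono (-x) hnk
      simp only at h4 ⊢
      rw [hudef]
      simp only
      rw [show -(x - (n:ℝ) * L) = -x + n * L by ring,
        show -(x - (k:ℝ) * L) = -x + k * L by ring]
      exact neg_le_neg h4
    have htail := tail_limit hL hd (mul_pos hd hf₂.zero_pos)
      hgc hgper hganti hgroot husmooth hub hupos hode hmono2
    obtain ⟨R, hR⟩ := htail ε hε
    refine ⟨⌈-R / L⌉₊, fun n hn x hx => ?_⟩
    have h1 : -R / L ≤ (⌈-R / L⌉₊ : ℝ) := Nat.le_ceil _
    have h2 : ((⌈-R / L⌉₊ : ℕ) : ℝ) ≤ (n : ℝ) := Nat.cast_le.mpr hn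
    have h3 : -R ≤ (n : ℝ) * L := by
      have h4 : -R / L ≤ (n : ℝ) := by linarith
      calc -R = (-R / L) * L := by field_simp
        _ ≤ (n : ℝ) * L := mul_le_mul_of_nonneg_right h4 hL.le
    have h5 := hR (-x) (by linarith [hx.1])
    rw [hu2 (-x), hu1] at h5
    simp only [neg_neg, hudef] at h5
    rw [show -e x - d * a₂ = -(e x + d * a₂) from by ring, abs_neg, abs_neg] at h5
    exact h5
end
end
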